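/- arXiv:1905.00850 — 9 statements merged into one kernel-verified Lean document; each statement's English description precedes it below -/
import Mathlib

section
/- With d = dep(p) ≥ 2, t = ⌈log₂ d⌉, and V' = {v ∈ V : dep(v) mod t = 0 and dep(v) + t ≤ d}, for every vertex v ∈ V there exists i ∈ {0, 1, ..., 2t} such that p^(i)(v) ∈ V'. -/
open Function

/-- `u` is an ancestor of `v` in the rooted forest given by parent pointers `p`. -/
def IsAncestor {V : Type} (p : V → V) (u v : V) : Prop := ∃ i : ℕ, p^[i] v = u

/-- The depth of `v`: the least `i` with `p^[i+1] v = p^[i] v`. -/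
noncomputable def dep {V : Type} (p : V → V) (v : V) : ℕ :=
  sInf {i : ℕ | p^[i + 1] v = p^[i] v}

/-- The depth of the rooted tree `p`. -/
noncomputable def treeDep {V : Type} [Fintype V] (p : V → V) : ℕ :=
  Finset.univ.sup (dep p)

lemma dep_stab {V : Type} (p : V → V) (v : V)
    (hstab : ∃ i : ℕ, p^[i + 1] v = p^[i] v) :
    ∀ j, dep p v ≤ j → p^[j + 1] v = p^[j] v := by
  have hmem : p^[dep p v + 1] v = p^[dep p v] v := Nat.sInf_mem hstab
  intro j hj
  obtain ⟨m, rfl⟩ := Nat.exists_eq_add_of_le hj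
  induction m with
  | zero => simpa using hmem
  | succ n ih =>
    have h := congrArg p (ih (Nat.le_add_right _ _))
    rw [← Function.iterate_succ_apply' p, ← Function.iterate_succ_apply' p] at h
    simpa [Nat.succ_eq_add_one, Nat.add_assoc] using h

lemma dep_set_eq {V : Type} (p : V → V) (v : V)
    (hstab : ∃ i : ℕ, p^[i + 1] v = p^[i] v) :
    {i : ℕ | p^[i + 1] v = p^[i] v} = Set.Ici (dep p v) := by
  ext j
  exact ⟨fun hj => Nat.sInf_le hj, fun hj => dep_stab p v hstab j hj⟩

lemma dep_iterate {V : Type} (p : V → V) (v : V)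
    (hstab : ∀ w : V, ∃ i : ℕ, p^[i + 1] w = p^[i] w) (i : ℕ) :
    dep p (p^[i] v) = dep p v - i := by
  have hset : {j : ℕ | p^[j + 1] (p^[i] v) = p^[j] (p^[i] v)} = Set.Ici (dep p v - i) := by
    ext j
    have h1 : p^[j + 1] (p^[i] v) = p^[j + 1 + i] v := (Function.iterate_add_apply p _ i v).symm
    have h2 : p^[j] (p^[i] v) = p^[j + i] v := (Function.iterate_add_apply p j i v).symm
    have h3 : j + 1 + i = (j + i) + 1 := by ring
    rw [Set.mem_setOf_eq, h1, h2, h3]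
    have hiff : p^[(j + i) + 1] v = p^[j + i] v ↔ j + i ∈ Set.Ici (dep p v) := by
      rw [← dep_set_eq p v (hstab v)]; rfl
    rw [hiff]
    simp only [Set.mem_Ici]
    omega
  rw [dep, hset, csInf_Ici]

theorem stmt3 {V : Type} [Fintype V] [DecidableEq V]
    (p : V → V) (r : V)
    (hstab : ∀ v : V, ∃ i : ℕ, p^[i + 1] v = p^[i] v)
    (hr : p r = r) (hroot : ∀ v : V, p v = v → v = r)
    (d t : ℕ) (hd : d = treeDep p) (hd2 : 2 ≤ d) (ht : t = Nat.clog 2 d)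
    (V' : Set V) (hV' : V' = {v : V | dep p v % t = 0 ∧ dep p v + t ≤ d}) :
    ∀ v : V, ∃ i : ℕ, i ≤ 2 * t ∧ p^[i] v ∈ V' := by
  intro v
  set k := dep p v with hk
  have hkd : k ≤ d := by
    rw [hd]; exact Finset.le_sup (f := dep p) (Finset.mem_univ v)
  have ht1 : 1 ≤ t := by
    rw [ht]; exact Nat.clog_pos (by norm_num) hd2
  have htd : t ≤ d := by
    rw [ht]
    exact (Nat.clog_le_iff_le_pow (by norm_num)).mpr (Nat.lt_two_pow_self (n := d)).le
  have ht0 : 0 < t := ht1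
  have hmodlt : k % t < t := Nat.mod_lt _ ht0
  obtain ⟨X, hXdef⟩ : ∃ X, X = t * (k / t) := ⟨_, rfl⟩
  have hdm : X + k % t = k := by rw [hXdef]; exact Nat.div_add_mod k t
  have hXmod : X % t = 0 := by rw [hXdef]; exact Nat.mul_mod_right t _
  by_cases hcase : k - k % t + t ≤ d
  · refine ⟨k % t, by omega, ?_⟩
    rw [hV']
    have hdep : dep p (p^[k % t] v) = k - k % t := dep_iterate p v hstab _
    have hX : k - k % t = X := by omega
    exact ⟨by rw [hdep, hX, hXmod], by rw [hdep]; omega⟩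
  · have hq : 1 ≤ k / t := by
      rcases Nat.eq_zero_or_pos (k / t) with h0 | h
      · rw [h0, Nat.mul_zero] at hXdef; omega
      · exact h
    have htX : t ≤ X := by
      rw [hXdef]; exact Nat.le_mul_of_pos_right t hq
    have hXt : X - t = t * (k / t - 1) := by
      rw [hXdef, Nat.mul_sub, Nat.mul_one]
    refine ⟨k % t + t, by omega, ?_⟩
    rw [hV']
    have hdep : dep p (p^[k % t + t] v) = k - (k % t + t) := dep_iterate p v hstab _
    have hX : k - (k % t + t) = X - t := by omega
    constructor
    · rw [hdep, hX, hXt]; exact Nat.mul_mod_right t _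
    · rw [hdep]; omega
end

section
/- Let G be a simple graph and let e1, e2, e3 be edges of G with e1 ≠ e3. If some simple cycle of G contains both e1 and e2, and some simple cycle of G contains both e2 and e3, then some simple cycle of G contains both e1 and e3. -/
namespace CycleTrans

open SimpleGraph Walk

variable {V : Type} {G : SimpleGraph V}

/-- If a path ends at `a` and contains an edge `s(a,b)`, that edge is the last edge. -/
lemma lastEdge {u a b : V} (p : G.Walk u a) (hp : p.IsPath)
    (he : s(a,b) ∈ p.edges) :
    ∃ (h2 : G.Adj b a) (r : G.Walk u b), p = r.concat h2 := by
  induction p with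
  | nil => simp at he
  | @cons u w t hd p' ih =>
    have hp' : p'.IsPath := hp.of_cons
    have hua : u ≠ t := by
      rintro rfl
      rw [Walk.isPath_iff_eq_nil] at hp
      simp [hp] at he
    rw [Walk.edges_cons, List.mem_cons] at he
    rcases he with he | he
    · rw [Sym2.eq_iff] at he
      rcases he with ⟨rfl, rfl⟩ | ⟨rfl, rfl⟩
      · exact absurd rfl hua
      · have : p' = Walk.nil := by rwa [Walk.isPath_iff_eq_nil] at hp'
        subst this
        exact ⟨hd, Walk.nil, rfl⟩
    · obtain ⟨h2, r, rfl⟩ := ih hp' he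
      exact ⟨h2, Walk.cons hd r, (Walk.concat_cons hd r h2).symm⟩

/-- Decompose a cycle along one of its edges. -/
lemma cycle_decomp {x a b : V} (c : G.Walk x x) (hc : c.IsCycle)
    (he : s(a,b) ∈ c.edges) :
    ∃ (h : G.Adj a b) (Q : G.Walk b a), Q.IsPath ∧ s(a,b) ∉ Q.edges ∧
      (∀ f, f ∈ c.edges ↔ f = s(a,b) ∨ f ∈ Q.edges) := by
  classical
  have ha : a ∈ c.support := c.fst_mem_support_of_mem_edges he
  set c' : G.Walk a a := c.rotate a ha with hc'def
  have hc' : c'.IsCycle := hc.rotate ha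
  have hmem : ∀ f, f ∈ c'.edges ↔ f ∈ c.edges := fun f =>
    (c.rotate_edges a ha).mem_iff
  have he' : s(a,b) ∈ c'.edges := (hmem _).2 he
  clear_value c'
  cases c' with
  | nil => simp at he'
  | @cons _ w _ h' t =>
    have hnodupE : (s(a,w) :: t.edges).Nodup := by
      simpa using hc'.isTrail.edges_nodup
    have htpath : t.IsPath := by
      refine Walk.IsPath.mk' ?_
      have := hc'.2
      simpa using this
    rw [Walk.edges_cons, List.mem_cons] at he'
    by_cases hbw : s(a,b) = s(a,w)
    · have : b = w := Sym2.congr_right.mp hbw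
      subst this
      refine ⟨h', t, htpath, fun hbt => (List.nodup_cons.mp hnodupE).1 hbt, ?_⟩
      intro f
      rw [← hmem f, Walk.edges_cons, List.mem_cons]
    · have het : s(a,b) ∈ t.edges := he'.resolve_left hbw
      obtain ⟨h2, r, rfl⟩ := lastEdge t htpath het
      -- c' = cons h' (r.concat h2), with h2 : Adj b a, h' : Adj a w, r : Walk w b
      have hsupp : r.support.Nodup ∧ a ∉ r.support := by
        have := hc'.2
        rw [Walk.support_cons, List.tail_cons, Walk.support_concat,
          List.nodup_append'] at this
        exact ⟨this.1, fun har => this.2.2 har (List.mem_singleton_self a)⟩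
      have hedges : (Walk.cons h' (r.concat h2)).edges
          = s(a,w) :: (r.edges ++ [s(b,a)]) := by
        rw [Walk.edges_cons, Walk.edges_concat, List.concat_eq_append]
      have hnd : (s(a,w) :: (r.edges ++ [s(b,a)])).Nodup := by
        rw [← hedges]; exact hc'.isTrail.edges_nodup
      refine ⟨h2.symm, (Walk.cons h' r).reverse, ?_, ?_, ?_⟩
      · refine Walk.IsPath.reverse (Walk.IsPath.mk' ?_)
        rw [Walk.support_cons]
        exact List.nodup_cons.mpr ⟨hsupp.2, hsupp.1⟩
      · rw [Walk.edges_reverse, List.mem_reverse, Walk.edges_cons]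
        rw [List.nodup_cons, List.nodup_append'] at hnd
        intro hmem'
        rcases List.mem_cons.mp hmem' with h | h
        · exact hnd.1 (by rw [← h, Sym2.eq_swap]; exact List.mem_append_right _ (List.mem_singleton_self _))
        · exact hnd.2.2.2 (by rwa [Sym2.eq_swap] at h) (List.mem_singleton_self _)
      · intro f
        rw [← hmem f, hedges, Walk.edges_reverse, List.mem_reverse, Walk.edges_cons]
        constructor
        · intro hf
          rcases List.mem_cons.mp hf with h | h
          · exact Or.inr (List.mem_cons.mpr (Or.inl h))
          · rcases List.mem_append.mp h with h | h
            · exact Or.inr (List.mem_cons.mpr (Or.inr h))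
            · exact Or.inl (by rw [List.mem_singleton.mp h, Sym2.eq_swap])
        · intro hf
          rcases hf with rfl | hf
          · refine List.mem_cons.mpr (Or.inr (List.mem_append_right _ ?_))
            rw [Sym2.eq_swap]
            exact List.mem_singleton_self _
          · rcases List.mem_cons.mp hf with h | h
            · exact List.mem_cons.mpr (Or.inl h)
            · exact List.mem_cons.mpr (Or.inr (List.mem_append_left _ h))

/-- Split a walk at an edge it contains. -/
lemma splitAtEdge {s t : V} (p : G.Walk s t) {e : Sym2 V} (he : e ∈ p.edges) :
    ∃ (u v : V) (h : G.Adj u v) (p₁ : G.Walk s u) (p₂ : G.Walk v t),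
      p = p₁.append (Walk.cons h p₂) ∧ s(u,v) = e := by
  induction p with
  | nil => simp at he
  | @cons s w t hd p' ih =>
    rw [Walk.edges_cons, List.mem_cons] at he
    by_cases h1 : e = s(s, w)
    · exact ⟨s, w, hd, Walk.nil, p', by rw [Walk.nil_append], h1.symm⟩
    · obtain ⟨u, v, h, p₁, p₂, rfl, huv⟩ := ih (he.resolve_left h1)
      exact ⟨u, v, h, Walk.cons hd p₁, p₂, by rw [Walk.cons_append], huv⟩

/-- Truncate a walk at the first vertex lying in a list `L`. -/
lemma firstHit {c d : V} (W : G.Walk c d) (L : List V) (hdL : d ∈ L) :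
    ∃ (p : V) (W₁ : G.Walk c p) (W₂ : G.Walk p d),
      W = W₁.append W₂ ∧ p ∈ L ∧ ∀ y ∈ W₁.support, y ∈ L → y = p := by
  classical
  induction W with
  | nil =>
    refine ⟨_, Walk.nil, Walk.nil, rfl, hdL, ?_⟩
    intro y hy _
    simpa using hy
  | @cons c w d hd' W' ih =>
    by_cases hcL : c ∈ L
    · refine ⟨c, Walk.nil, Walk.cons hd' W', by rw [Walk.nil_append], hcL, ?_⟩
      intro y hy _
      simpa using hy
    · obtain ⟨p, W₁, W₂, rfl, hpL, hW₁⟩ := ih hdL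
      refine ⟨p, Walk.cons hd' W₁, W₂, by rw [Walk.cons_append], hpL, ?_⟩
      intro y hy hyL
      rw [Walk.support_cons, List.mem_cons] at hy
      rcases hy with rfl | hy
      · exact absurd hyL hcL
      · exact hW₁ y hy hyL

/-- Split a walk at two distinct vertices on it, in one of the two orders. -/
lemma twoPointSplit {s t p q : V} (Q : G.Walk s t) (hp : p ∈ Q.support)
    (hq : q ∈ Q.support) (hpq : p ≠ q) :
    (∃ (T : G.Walk s p) (M : G.Walk p q) (E : G.Walk q t), Q = T.append (M.append E)) ∨
    (∃ (T : G.Walk s q) (M : G.Walk q p) (E : G.Walk p t), Q = T.append (M.append E)) := by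
  classical
  induction Q with
  | nil =>
    simp only [Walk.support_nil, List.mem_singleton] at hp hq
    exact absurd (hp.trans hq.symm) hpq
  | @cons s w t hd Q' ih =>
    by_cases hsp : s = p
    · subst hsp
      left
      exact ⟨Walk.nil, (Walk.cons hd Q').takeUntil q hq, (Walk.cons hd Q').dropUntil q hq,
        by rw [Walk.nil_append, Walk.take_spec]⟩
    · by_cases hsq : s = q
      · subst hsq
        right
        exact ⟨Walk.nil, (Walk.cons hd Q').takeUntil p hp, (Walk.cons hd Q').dropUntil p hp,
          by rw [Walk.nil_append, Walk.take_spec]⟩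
      · have hp' : p ∈ Q'.support := by
          rw [Walk.support_cons, List.mem_cons] at hp
          exact hp.resolve_left (fun h => hsp h.symm)
        have hq' : q ∈ Q'.support := by
          rw [Walk.support_cons, List.mem_cons] at hq
          exact hq.resolve_left (fun h => hsq h.symm)
        rcases ih hp' hq' with ⟨T, M, E, rfl⟩ | ⟨T, M, E, rfl⟩
        · exact Or.inl ⟨Walk.cons hd T, M, E, by rw [Walk.cons_append]⟩
        · exact Or.inr ⟨Walk.cons hd T, M, E, by rw [Walk.cons_append]⟩

lemma arcAux {b a p q : V} {Q : G.Walk b a} (hQ : Q.IsPath) (hab : G.Adj a b)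
    (hnE : s(a,b) ∉ Q.edges) (hpq : p ≠ q)
    (T : G.Walk b p) (M : G.Walk p q) (E : G.Walk q a)
    (hsplit : Q = T.append (M.append E)) {e : Sym2 V}
    (he : e = s(a,b) ∨ e ∈ Q.edges) :
    ∃ A : G.Walk p q, A.IsPath ∧ e ∈ A.edges ∧
      (∀ f ∈ A.edges, f = s(a,b) ∨ f ∈ Q.edges) ∧ (∀ y ∈ A.support, y ∈ Q.support) := by
  subst hsplit
  have hsupp : (T.support ++ (M.support.tail ++ E.support.tail)).Nodup := by
    have h := hQ.support_nodup
    rwa [Walk.support_append, Walk.support_append, Walk.support_eq_cons M,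
      List.cons_append, List.tail_cons] at h
  rw [List.nodup_append'] at hsupp
  obtain ⟨hTnd, hMEnd, hTdisj⟩ := hsupp
  rw [List.nodup_append'] at hMEnd
  obtain ⟨hMnd, hEnd, hMEdisj⟩ := hMEnd
  have hpT : p ∈ T.support := T.end_mem_support
  have hqM : q ∈ M.support.tail := by
    have := M.end_mem_support
    rw [Walk.support_eq_cons M, List.mem_cons] at this
    exact this.resolve_left (fun h => hpq h.symm)
  have hsupQeq : (T.append (M.append E)).support
      = T.support ++ (M.support.tail ++ E.support.tail) := by
    rw [Walk.support_append, Walk.support_append]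
    congr 1
    conv_lhs => rw [Walk.support_eq_cons M]
    rw [List.cons_append, List.tail_cons]
  have hsupQ : ∀ y, y ∈ (T.append (M.append E)).support ↔
      y ∈ T.support ++ (M.support.tail ++ E.support.tail) := fun y => by rw [hsupQeq]
  have hedgQ : ∀ f, f ∈ (T.append (M.append E)).edges ↔
      f ∈ T.edges ++ (M.edges ++ E.edges) := by
    intro f
    rw [Walk.edges_append, Walk.edges_append]
  by_cases heM : e ∈ M.edges
  · refine ⟨M, ?_, heM, ?_, ?_⟩
    · refine Walk.IsPath.mk' ?_
      rw [Walk.support_eq_cons M]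
      exact List.nodup_cons.mpr ⟨fun h => hTdisj hpT (List.mem_append_left _ h), hMnd⟩
    · intro f hf
      exact Or.inr ((hedgQ f).mpr (List.mem_append_right _ (List.mem_append_left _ hf)))
    · intro y hy
      rw [hsupQ y]
      rw [Walk.support_eq_cons M, List.mem_cons] at hy
      rcases hy with rfl | hy
      · exact List.mem_append_left _ hpT
      · exact List.mem_append_right _ (List.mem_append_left _ hy)
  · -- use the other arc, through the edge ab
    have hqE : E.support = q :: E.support.tail := Walk.support_eq_cons E
    have hqnotE : q ∉ E.support.tail := fun h => hMEdisj hqM h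
    have hB : (E.append (Walk.cons hab T)).support = E.support ++ T.support := by
      rw [Walk.support_append, Walk.support_cons, List.tail_cons]
    refine ⟨(E.append (Walk.cons hab T)).reverse, ?_, ?_, ?_, ?_⟩
    · refine Walk.IsPath.reverse (Walk.IsPath.mk' ?_)
      rw [hB]
      refine List.nodup_append'.mpr ⟨?_, hTnd, ?_⟩
      · rw [hqE]
        exact List.nodup_cons.mpr ⟨hqnotE, hEnd⟩
      · intro y hyE hyT
        rw [hqE, List.mem_cons] at hyE
        rcases hyE with rfl | hyE
        · exact hTdisj hyT (List.mem_append_left _ hqM)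
        · exact hTdisj hyT (List.mem_append_right _ hyE)
    · rw [Walk.edges_reverse, List.mem_reverse, Walk.edges_append, Walk.edges_cons]
      rcases he with rfl | heQ
      · exact List.mem_append_right _ (List.mem_cons_self)
      · rcases List.mem_append.mp ((hedgQ e).mp heQ) with h | h
        · exact List.mem_append_right _ (List.mem_cons.mpr (Or.inr h))
        · rcases List.mem_append.mp h with h | h
          · exact absurd h heM
          · exact List.mem_append_left _ h
    · intro f hf
      rw [Walk.edges_reverse, List.mem_reverse, Walk.edges_append, Walk.edges_cons] at hf
      rcases List.mem_append.mp hf with h | h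
      · exact Or.inr ((hedgQ f).mpr (List.mem_append_right _ (List.mem_append_right _ h)))
      · rcases List.mem_cons.mp h with rfl | h
        · exact Or.inl rfl
        · exact Or.inr ((hedgQ f).mpr (List.mem_append_left _ h))
    · intro y hy
      rw [Walk.support_reverse, List.mem_reverse, hB] at hy
      rw [hsupQ y]
      rcases List.mem_append.mp hy with h | h
      · rw [hqE, List.mem_cons] at h
        rcases h with rfl | h
        · exact List.mem_append_right _ (List.mem_append_left _ hqM)
        · exact List.mem_append_right _ (List.mem_append_right _ h)
      · exact List.mem_append_left _ h

lemma arcLemma {b a p q : V} {Q : G.Walk b a} (hQ : Q.IsPath) (hab : G.Adj a b)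
    (hnE : s(a,b) ∉ Q.edges) (hp : p ∈ Q.support) (hq : q ∈ Q.support) (hpq : p ≠ q)
    {e : Sym2 V} (he : e = s(a,b) ∨ e ∈ Q.edges) :
    ∃ A : G.Walk p q, A.IsPath ∧ e ∈ A.edges ∧
      (∀ f ∈ A.edges, f = s(a,b) ∨ f ∈ Q.edges) ∧ (∀ y ∈ A.support, y ∈ Q.support) := by
  rcases twoPointSplit Q hp hq hpq with ⟨T, M, E, hs⟩ | ⟨T, M, E, hs⟩
  · exact arcAux hQ hab hnE hpq T M E hs he
  · obtain ⟨A', h1, h2, h3, h4⟩ := arcAux hQ hab hnE (Ne.symm hpq) T M E hs he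
    refine ⟨A'.reverse, h1.reverse, ?_, ?_, ?_⟩
    · rwa [Walk.edges_reverse, List.mem_reverse]
    · intro f hf
      rw [Walk.edges_reverse, List.mem_reverse] at hf
      exact h3 f hf
    · intro y hy
      rw [Walk.support_reverse, List.mem_reverse] at hy
      exact h4 y hy

/-- Two walks whose supports meet a list `L` only in special ways cannot share an edge. -/
lemma no_shared_edge {w x y z y0 : V} (W1 : G.Walk w x) (W2 : G.Walk y z) (L : List V)
    (h1 : ∀ t ∈ W1.support, t ∈ L) (h2 : ∀ t ∈ W2.support, t ∈ L → t = y0)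
    {f : Sym2 V} (hf1 : f ∈ W1.edges) (hf2 : f ∈ W2.edges) : False := by
  induction f using Sym2.ind with
  | _ c d =>
    have hadj : G.Adj c d := W1.adj_of_mem_edges hf1
    have hc2 : c ∈ W2.support := W2.fst_mem_support_of_mem_edges hf2
    have hd2 : d ∈ W2.support := W2.snd_mem_support_of_mem_edges hf2
    have hc1 : c ∈ W1.support := W1.fst_mem_support_of_mem_edges hf1
    have hd1 : d ∈ W1.support := W1.snd_mem_support_of_mem_edges hf1
    have hcy : c = y0 := h2 c hc2 (h1 c hc1)
    have hdy : d = y0 := h2 d hd2 (h1 d hd1)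
    exact hadj.ne (hcy.trans hdy.symm)

end CycleTrans

open CycleTrans SimpleGraph Walk in
theorem stmt5 {V : Type} (G : SimpleGraph V) (e1 e2 e3 : Sym2 V) (hne : e1 ≠ e3)
    (h12 : ∃ (x : V) (c : G.Walk x x), c.IsCycle ∧ e1 ∈ c.edges ∧ e2 ∈ c.edges)
    (h23 : ∃ (x : V) (c : G.Walk x x), c.IsCycle ∧ e2 ∈ c.edges ∧ e3 ∈ c.edges) :
    ∃ (x : V) (c : G.Walk x x), c.IsCycle ∧ e1 ∈ c.edges ∧ e3 ∈ c.edges := by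
  classical
  obtain ⟨x1, c1, hc1, he1c1, he2c1⟩ := h12
  obtain ⟨x2, c2, hc2, he2c2, he3c2⟩ := h23
  by_cases he3c1 : e3 ∈ c1.edges
  · exact ⟨x1, c1, hc1, he1c1, he3c1⟩
  by_cases he1c2 : e1 ∈ c2.edges
  · exact ⟨x2, c2, hc2, he1c2, he3c2⟩
  -- e2 = s(a,b)
  induction e2 using Sym2.ind with
  | _ a b =>
  obtain ⟨hab, Q, hQpath, hQnE, hQmem⟩ := cycle_decomp c1 hc1 he2c1
  obtain ⟨hab', R, hRpath, hRnE, hRmem⟩ := cycle_decomp c2 hc2 he2c2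
  have he1ne2 : e1 ≠ s(a,b) := fun h => he1c2 (h ▸ he2c2)
  have he3ne2 : e3 ≠ s(a,b) := fun h => he3c1 (h ▸ he2c1)
  have he1Q : e1 ∈ Q.edges := ((hQmem e1).mp he1c1).resolve_left he1ne2
  have he3R : e3 ∈ R.edges := ((hRmem e3).mp he3c2).resolve_left he3ne2
  have he3Q : e3 ∉ Q.edges := fun h => he3c1 ((hQmem e3).mpr (Or.inr h))
  have he1R : e1 ∉ R.edges := fun h => he1c2 ((hRmem e1).mpr (Or.inr h))
  -- split R at e3
  obtain ⟨u, v, huv, R₁, R₂, hRsplit, huve3⟩ := splitAtEdge R he3R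
  have hRs : (R₁.support ++ R₂.support).Nodup := by
    have h := hRpath.support_nodup
    rwa [hRsplit, Walk.support_append, Walk.support_cons, List.tail_cons] at h
  have hRe : (R₁.edges ++ (s(u,v) :: R₂.edges)).Nodup := by
    have h := hRpath.isTrail.edges_nodup
    rwa [hRsplit, Walk.edges_append, Walk.edges_cons] at h
  rw [List.nodup_append'] at hRs
  rw [List.nodup_append'] at hRe
  have hR1path : R₁.IsPath := Walk.IsPath.mk' hRs.1
  have hR2path : R₂.IsPath := Walk.IsPath.mk' hRs.2.1
  -- first hits
  obtain ⟨p, S1, T1, hsp1, hpQ, hS1L⟩ := firstHit R₁.reverse Q.support Q.start_mem_support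
  obtain ⟨q, S2, T2, hsp2, hqQ, hS2L⟩ := firstHit R₂ Q.support Q.end_mem_support
  have hS1sub : ∀ y ∈ S1.support, y ∈ R₁.support := by
    intro y hy
    have : y ∈ R₁.reverse.support := by
      rw [hsp1, Walk.support_append]
      exact List.mem_append_left _ hy
    rwa [Walk.support_reverse, List.mem_reverse] at this
  have hS2sub : ∀ y ∈ S2.support, y ∈ R₂.support := by
    intro y hy
    rw [hsp2, Walk.support_append]
    exact List.mem_append_left _ hy
  have hS1e : ∀ f ∈ S1.edges, f ∈ R₁.edges := by
    intro f hf
    have : f ∈ R₁.reverse.edges := by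
      rw [hsp1, Walk.edges_append]
      exact List.mem_append_left _ hf
    rwa [Walk.edges_reverse, List.mem_reverse] at this
  have hS2e : ∀ f ∈ S2.edges, f ∈ R₂.edges := by
    intro f hf
    rw [hsp2, Walk.edges_append]
    exact List.mem_append_left _ hf
  have hS1path : S1.IsPath := by
    refine Walk.IsPath.mk' ?_
    have h := (hR1path.reverse).support_nodup
    rw [hsp1, Walk.support_append, List.nodup_append'] at h
    exact h.1
  have hS2path : S2.IsPath := by
    refine Walk.IsPath.mk' ?_
    have h := hR2path.support_nodup
    rw [hsp2, Walk.support_append, List.nodup_append'] at h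
    exact h.1
  have hpq : p ≠ q := by
    rintro rfl
    exact hRs.2.2 (hS1sub p S1.end_mem_support) (hS2sub p S2.end_mem_support)
  -- the arc of the first cycle through e1
  obtain ⟨A, hApath, heA, hAedges, hAsup⟩ :=
    arcLemma hQpath hab hQnE hpQ hqQ hpq (Or.inr he1Q)
  -- build the final cycle
  refine ⟨p, A.append (S2.reverse.append (Walk.cons huv.symm S1)), ?_, ?_, ?_⟩
  · rw [Walk.isCycle_def]
    have hAe_c1 : ∀ f ∈ A.edges, f ∈ c1.edges := fun f hf => (hQmem f).mpr (hAedges f hf)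
    refine ⟨⟨?_⟩, ?_, ?_⟩
    · -- edges nodup
      rw [Walk.edges_append, Walk.edges_append, Walk.edges_cons]
      refine List.nodup_append'.mpr ⟨hApath.isTrail.edges_nodup, ?_, ?_⟩
      · refine List.nodup_append'.mpr ⟨?_, ?_, ?_⟩
        · rw [Walk.edges_reverse]
          exact List.nodup_reverse.mpr hS2path.isTrail.edges_nodup
        · refine List.nodup_cons.mpr ⟨?_, hS1path.isTrail.edges_nodup⟩
          intro h
          have : s(u,v) ∈ R₁.edges := by
            have := hS1e _ h
            rwa [Sym2.eq_swap] at this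
          exact hRe.2.2 this (List.mem_cons_self)
        · intro f hf2 hf
          rw [Walk.edges_reverse, List.mem_reverse] at hf2
          rcases List.mem_cons.mp hf with rfl | hf
          · have : s(u,v) ∈ R₂.edges := by
              have := hS2e _ hf2
              rwa [Sym2.eq_swap] at this
            exact (List.nodup_cons.mp hRe.2.1).1 this
          · exact hRe.2.2 (hS1e f hf) (List.mem_cons.mpr (Or.inr (hS2e f hf2)))
      · -- A's edges disjoint from the rest
        intro f hfA hf
        rcases List.mem_append.mp hf with hf2 | hf
        · rw [Walk.edges_reverse, List.mem_reverse] at hf2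
          exact no_shared_edge A S2 Q.support hAsup
            (fun t ht hL => hS2L t ht hL) hfA hf2
        · rcases List.mem_cons.mp hf with rfl | hf1
          · have : e3 ∈ c1.edges := by
              rw [← huve3, Sym2.eq_swap]
              exact hAe_c1 _ hfA
            exact he3c1 this
          · exact no_shared_edge A S1 Q.support hAsup
              (fun t ht hL => hS1L t ht hL) hfA hf1
    · -- not nil
      intro h
      have : e1 ∈ (Walk.nil : G.Walk p p).edges := by
        rw [← h, Walk.edges_append]
        exact List.mem_append_left _ heA
      simp at this
    · -- support tail nodup
      rw [Walk.support_append, Walk.support_append, Walk.support_cons, List.tail_cons,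
        Walk.support_eq_cons S2.reverse, List.cons_append, List.tail_cons,
        Walk.support_eq_cons A, List.cons_append, List.tail_cons]
      have hS2rt : ∀ y ∈ S2.reverse.support.tail, y ∈ S2.support := by
        intro y hy
        have : y ∈ S2.reverse.support := by
          rw [Walk.support_eq_cons S2.reverse]
          exact List.mem_cons.mpr (Or.inr hy)
        rwa [Walk.support_reverse, List.mem_reverse] at this
      have hqS2rt : q ∉ S2.reverse.support.tail := by
        have h := (hS2path.reverse).support_nodup
        rw [Walk.support_eq_cons S2.reverse] at h
        exact (List.nodup_cons.mp h).1
      refine List.nodup_append'.mpr ⟨?_, ?_, ?_⟩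
      · have h := hApath.support_nodup
        rw [Walk.support_eq_cons A] at h
        exact (List.nodup_cons.mp h).2
      · refine List.nodup_append'.mpr ⟨?_, hS1path.support_nodup, ?_⟩
        · have h := (hS2path.reverse).support_nodup
          rw [Walk.support_eq_cons S2.reverse] at h
          exact (List.nodup_cons.mp h).2
        · intro y hy2 hy1
          exact hRs.2.2 (hS1sub y hy1) (hS2sub y (hS2rt y hy2))
      · intro y hyA hy
        have hyQ : y ∈ Q.support := hAsup y (by
          rw [Walk.support_eq_cons A]; exact List.mem_cons.mpr (Or.inr hyA))
        rcases List.mem_append.mp hy with hy2 | hy1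
        · have : y = q := hS2L y (hS2rt y hy2) hyQ
          subst this
          exact hqS2rt hy2
        · have : y = p := hS1L y hy1 hyQ
          subst this
          have h := hApath.support_nodup
          rw [Walk.support_eq_cons A] at h
          exact (List.nodup_cons.mp h).1 hyA
  · rw [Walk.edges_append]
    exact List.mem_append_left _ heA
  · rw [Walk.edges_append, Walk.edges_append, Walk.edges_cons]
    refine List.mem_append_right _ (List.mem_append_right _ (List.mem_cons.mpr (Or.inl ?_)))
    rw [← huve3, Sym2.eq_swap]
end

section
/- Let G be a simple graph and let D' ∈ ℕ be such that whenever two vertices of G lie on a common simple cycle, they lie on a common simple cycle of length at most D'. If e1 and e2 are edges of G contained in a common simple cycle, then e1 and e2 are contained in a common simple cycle of length at most 3·D'. -/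
open SimpleGraph Walk

set_option linter.unusedSectionVars false
set_option maxHeartbeats 1000000

variable {V : Type} {G : SimpleGraph V} [DecidableEq V]




private lemma wlen_pos {u v : V} (p : G.Walk u v) (h : u ≠ v) : 1 ≤ p.length := by
  cases p with
  | nil => exact absurd rfl h
  | cons _ q => simp [Walk.length_cons]

private lemma path_append {a b c : V} {p : G.Walk a b} {q : G.Walk b c}
    (hp : p.IsPath) (hq : q.IsPath) (hj : ∀ v, v ∈ p.support → v ∈ q.support → v = b) :
    (p.append q).IsPath := by
  rw [Walk.isPath_def, Walk.support_append]
  refine List.Nodup.append hp.support_nodup ?_ ?_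
  · have := hq.support_nodup
    rw [q.support_eq_cons] at this
    exact this.of_cons
  · intro v hv hv'
    have hvq : v ∈ q.support := List.mem_of_mem_tail hv'
    have : v = b := hj v hv hvq
    subst this
    have := hq.support_nodup
    rw [q.support_eq_cons, List.nodup_cons] at this
    exact this.1 hv'

private lemma end_mem_tail {v : V} {c : G.Walk v v} (hnil : ¬c.Nil) : v ∈ c.support.tail := by
  rw [← Walk.support_tail_of_not_nil _ hnil]
  exact Walk.end_mem_support _

private lemma mem_support_closed {v : V} {c : G.Walk v v} (hnil : ¬c.Nil) {w : V} :
    w ∈ c.support ↔ w ∈ c.support.tail := by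
  constructor
  · intro hw
    rw [c.support_eq_cons, List.mem_cons] at hw
    rcases hw with rfl | hw
    · exact end_mem_tail hnil
    · exact hw
  · intro hw
    rw [c.support_eq_cons, List.mem_cons]
    exact Or.inr hw


private lemma length_rotate' {v u : V} (c : G.Walk v v) (h : u ∈ c.support) :
    (c.rotate u h).length = c.length := by
  have h1 := congrArg Walk.length (c.take_spec h)
  rw [Walk.length_append] at h1
  unfold Walk.rotate
  rw [Walk.length_append]
  omega

private lemma rotate_not_nil {v u : V} {c : G.Walk v v} (hc : c.IsCycle) (h : u ∈ c.support) :
    ¬(c.rotate u h).Nil := by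
  have := (hc.rotate h).not_nil
  exact this

private lemma mem_support_rotate {v u : V} {c : G.Walk v v} (hc : c.IsCycle) (h : u ∈ c.support)
    {w : V} : w ∈ (c.rotate u h).support ↔ w ∈ c.support := by
  rw [mem_support_closed (rotate_not_nil hc h), mem_support_closed hc.not_nil]
  exact (Walk.support_rotate c u h).perm.mem_iff

private lemma mem_edges_rotate {v u : V} {c : G.Walk v v} (h : u ∈ c.support)
    {e : Sym2 V} : e ∈ (c.rotate u h).edges ↔ e ∈ c.edges :=
  (Walk.rotate_edges c u h).perm.mem_iff



private lemma cycle_split {z : V} {c : G.Walk z z} (hc : c.IsCycle) {a : V} (ha : a ∈ c.support)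
    (hne : a ≠ z) :
    ∃ (p : G.Walk z a) (q : G.Walk a z),
      p.IsPath ∧ q.IsPath ∧
      (∀ v, v ∈ p.support → v ∈ q.support → v = z ∨ v = a) ∧
      p.append q = c := by
  set p := c.takeUntil a ha with hp
  set q := c.dropUntil a ha with hq
  have hspec : p.append q = c := c.take_spec ha
  have hkey : c.support = p.support ++ q.support.tail := by
    rw [← hspec, Walk.support_append]
  have hps : p.support = z :: p.support.tail := p.support_eq_cons
  have hqs : q.support = a :: q.support.tail := q.support_eq_cons
  have htail : c.support.tail = p.support.tail ++ q.support.tail := by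
    rw [hkey, hps]; rfl
  have hnod : (p.support.tail ++ q.support.tail).Nodup := by
    rw [← htail]; exact hc.support_nodup
  rw [List.nodup_append] at hnod
  obtain ⟨hnp, hnq, hdisj⟩ := hnod
  have hzq : z ∈ q.support.tail := by
    have hz : z ∈ q.support := q.end_mem_support
    rw [hqs, List.mem_cons] at hz
    rcases hz with h | h
    · exact absurd h.symm hne
    · exact h
  have hap : a ∈ p.support.tail := by
    have h' : a ∈ p.support := p.end_mem_support
    rw [hps, List.mem_cons] at h'
    rcases h' with h | h
    · exact absurd h hne
    · exact h
  have hpath_p : p.IsPath := by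
    rw [Walk.isPath_def, hps, List.nodup_cons]
    exact ⟨fun hz' => hdisj _ hz' _ hzq rfl, hnp⟩
  have hpath_q : q.IsPath := by
    rw [Walk.isPath_def, hqs, List.nodup_cons]
    exact ⟨fun ha' => hdisj _ hap _ ha' rfl, hnq⟩
  refine ⟨p, q, hpath_p, hpath_q, ?_, hspec⟩
  intro v hvp hvq
  rw [hps, List.mem_cons] at hvp
  rcases hvp with rfl | hvp
  · exact Or.inl rfl
  rw [hqs, List.mem_cons] at hvq
  rcases hvq with rfl | hvq
  · exact Or.inr rfl
  · exact absurd rfl (hdisj _ hvp _ hvq)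

private lemma first_hit (S : Set V) :
    ∀ {b c : V} (T : G.Walk b c), T.IsPath → c ∈ S →
      ∃ (z : V) (W : G.Walk b z), W.IsPath ∧ z ∈ S ∧
        (∀ v ∈ W.support, v ∈ S → v = z) ∧ W.length ≤ T.length ∧
        (∀ v ∈ W.support, v ∈ T.support) := by
  intro b c T
  induction T with
  | nil =>
    intro _ hc
    exact ⟨_, Walk.nil, by simp, hc, by simp, by simp, by simp⟩
  | @cons u x c hadj T ih =>
    intro hT hc
    by_cases hb : u ∈ S
    · exact ⟨u, Walk.nil, by simp, hb, by simp, by simp, by simp⟩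
    · rw [Walk.cons_isPath_iff] at hT
      obtain ⟨z, W, h1, h2, h3, h4, h5⟩ := ih hT.1 hc
      refine ⟨z, Walk.cons hadj W, ?_, h2, ?_, ?_, ?_⟩
      · rw [Walk.cons_isPath_iff]
        exact ⟨h1, fun hu => hT.2 (h5 u hu)⟩
      · intro v hv hvS
        rw [Walk.support_cons, List.mem_cons] at hv
        rcases hv with rfl | hv
        · exact absurd hvS hb
        · exact h3 v hv hvS
      · simp only [Walk.length_cons]; omega
      · intro v hv
        rw [Walk.support_cons, List.mem_cons] at hv
        rw [Walk.support_cons, List.mem_cons]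
        rcases hv with rfl | hv
        · exact Or.inl rfl
        · exact Or.inr (h5 v hv)

/-- Split a cycle at two distinct vertices into two arcs, with all the useful facts. -/
private lemma cycle_two_split {w a b : V} {c : G.Walk w w} (hc : c.IsCycle)
    (ha : a ∈ c.support) (hb : b ∈ c.support) (hab : a ≠ b) :
    ∃ (p : G.Walk a b) (q : G.Walk b a),
      p.IsPath ∧ q.IsPath ∧
      (∀ v, v ∈ p.support → v ∈ q.support → v = a ∨ v = b) ∧
      (∀ v, v ∈ c.support → v ∈ p.support ∨ v ∈ q.support) ∧
      (∀ v, v ∈ p.support → v ∈ c.support) ∧ (∀ v, v ∈ q.support → v ∈ c.support) ∧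
      (∀ e, e ∈ c.edges → e ∈ p.edges ∨ e ∈ q.edges) ∧
      (∀ e, e ∈ p.edges → e ∈ c.edges) ∧ (∀ e, e ∈ q.edges → e ∈ c.edges) ∧
      p.length + q.length = c.length ∧ 1 ≤ p.length ∧ 1 ≤ q.length := by
  set c' := c.rotate a ha with hc'
  have hcyc' : c'.IsCycle := hc.rotate ha
  have hb' : b ∈ c'.support := (mem_support_rotate hc ha).mpr hb
  obtain ⟨p, q, hp, hq, hj, hspec⟩ := cycle_split hcyc' hb' (Ne.symm hab)
  have hsup : ∀ v, v ∈ c'.support ↔ v ∈ c.support := fun v => mem_support_rotate hc ha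
  have hedg : ∀ e, e ∈ c'.edges ↔ e ∈ c.edges := fun e => mem_edges_rotate ha
  have hlen : p.length + q.length = c.length := by
    have := congrArg Walk.length hspec
    rw [Walk.length_append] at this
    rw [this, hc']
    exact length_rotate' c ha
  have hmemsplit : ∀ v, v ∈ c'.support ↔ v ∈ p.support ∨ v ∈ q.support := by
    intro v
    rw [← hspec, Walk.mem_support_append_iff]
  have hedgesplit : c'.edges = p.edges ++ q.edges := by
    rw [← hspec, Walk.edges_append]
  refine ⟨p, q, hp, hq, ?_, ?_, ?_, ?_, ?_, ?_, ?_, hlen,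
      wlen_pos p hab, wlen_pos q (Ne.symm hab)⟩
  · intro v hvp hvq
    rcases hj v hvp hvq with h | h
    · exact Or.inl h
    · exact Or.inr h
  · intro v hv
    exact (hmemsplit v).mp ((hsup v).mpr hv)
  · intro v hv
    exact (hsup v).mp ((hmemsplit v).mpr (Or.inl hv))
  · intro v hv
    exact (hsup v).mp ((hmemsplit v).mpr (Or.inr hv))
  · intro e he
    have : e ∈ c'.edges := (hedg e).mpr he
    rw [hedgesplit, List.mem_append] at this
    exact this
  · intro e he
    refine (hedg e).mp ?_
    rw [hedgesplit, List.mem_append]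
    exact Or.inl he
  · intro e he
    refine (hedg e).mp ?_
    rw [hedgesplit, List.mem_append]
    exact Or.inr he

/-- Build the cycle `cons hadj M` for `M : Walk b a` a path inside cycle `c`. -/
private lemma attach_core {a b : V} {M : G.Walk b a} (hM : M.IsPath) (hadj : G.Adj a b)
    (hne : s(a, b) ∉ M.edges) :
    (Walk.cons hadj M).IsCycle ∧ s(a, b) ∈ (Walk.cons hadj M).edges := by
  constructor
  · rw [Walk.cons_isCycle_iff]
    exact ⟨hM, hne⟩
  · rw [Walk.edges_cons]
    exact List.mem_cons_self

private lemma attach_vertex {w a b : V} {c : G.Walk w w} (hc : c.IsCycle)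
    (ha : a ∈ c.support) (hb : b ∈ c.support) (hadj : G.Adj a b)
    (hne : s(a, b) ∉ c.edges) (u : V) (hu : u ∈ c.support) :
    ∃ (z : V) (D : G.Walk z z), D.IsCycle ∧ s(a, b) ∈ D.edges ∧ u ∈ D.support ∧
      D.length ≤ c.length := by
  obtain ⟨p, q, hp, hq, hj, hcov, hps, hqs, hesplit, hpe, hqe, hlen, hp1, hq1⟩ :=
    cycle_two_split hc ha hb hadj.ne
  rcases hcov u hu with hup | huq
  · have hne' : s(a, b) ∉ p.reverse.edges := by
      rw [Walk.edges_reverse]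
      intro hcon
      exact hne (hpe _ (List.mem_reverse.mp hcon))
    obtain ⟨h1, h2⟩ := attach_core hp.reverse hadj hne'
    refine ⟨a, Walk.cons hadj p.reverse, h1, h2, ?_, ?_⟩
    · rw [Walk.support_cons, List.mem_cons]
      right
      rw [Walk.support_reverse, List.mem_reverse]
      exact hup
    · rw [Walk.length_cons, Walk.length_reverse]
      omega
  · have hne' : s(a, b) ∉ q.edges := fun hcon => hne (hqe _ hcon)
    obtain ⟨h1, h2⟩ := attach_core hq hadj hne'
    refine ⟨a, Walk.cons hadj q, h1, h2, ?_, ?_⟩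
    · rw [Walk.support_cons, List.mem_cons]
      exact Or.inr huq
    · rw [Walk.length_cons]
      omega

private lemma attach_edge {w a b : V} {c : G.Walk w w} (hc : c.IsCycle)
    (ha : a ∈ c.support) (hb : b ∈ c.support) (hadj : G.Adj a b)
    (hne : s(a, b) ∉ c.edges) (f : Sym2 V) (hf : f ∈ c.edges) :
    ∃ (z : V) (D : G.Walk z z), D.IsCycle ∧ s(a, b) ∈ D.edges ∧ f ∈ D.edges ∧
      D.length ≤ c.length := by
  obtain ⟨p, q, hp, hq, hj, hcov, hps, hqs, hesplit, hpe, hqe, hlen, hp1, hq1⟩ :=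
    cycle_two_split hc ha hb hadj.ne
  rcases hesplit f hf with hfp | hfq
  · have hne' : s(a, b) ∉ p.reverse.edges := by
      rw [Walk.edges_reverse]
      intro hcon
      exact hne (hpe _ (List.mem_reverse.mp hcon))
    obtain ⟨h1, h2⟩ := attach_core hp.reverse hadj hne'
    refine ⟨a, Walk.cons hadj p.reverse, h1, h2, ?_, ?_⟩
    · rw [Walk.edges_cons]
      exact List.mem_cons_of_mem _ (by rw [Walk.edges_reverse]; exact List.mem_reverse.mpr hfp)
    · rw [Walk.length_cons, Walk.length_reverse]
      omega
  · have hne' : s(a, b) ∉ q.edges := fun hcon => hne (hqe _ hcon)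
    obtain ⟨h1, h2⟩ := attach_core hq hadj hne'
    refine ⟨a, Walk.cons hadj q, h1, h2, ?_, ?_⟩
    · rw [Walk.edges_cons]
      exact List.mem_cons_of_mem _ hfq
    · rw [Walk.length_cons]
      omega

/-- Vertex–edge lemma: if a vertex `u` and an edge `xy` lie on a common cycle, and every two
vertices on a common cycle lie on one of length ≤ k, then `u` and `xy` lie on a cycle of
length ≤ 2k. -/
private lemma vertex_edge (k : ℕ)
    (hD : ∀ u w : V,
      (∃ (x : V) (c : G.Walk x x), c.IsCycle ∧ u ∈ c.support ∧ w ∈ c.support) →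
      ∃ (x : V) (c : G.Walk x x), c.IsCycle ∧ u ∈ c.support ∧ w ∈ c.support ∧
        c.length ≤ k)
    (u x y : V) (hxy : G.Adj x y)
    (h : ∃ (w : V) (c : G.Walk w w), c.IsCycle ∧ u ∈ c.support ∧ s(x, y) ∈ c.edges) :
    ∃ (w : V) (c : G.Walk w w), c.IsCycle ∧ u ∈ c.support ∧ s(x, y) ∈ c.edges ∧
      c.length ≤ 2 * k := by
  obtain ⟨w0, C, hC, huC, heC⟩ := h
  have hxC : x ∈ C.support := C.fst_mem_support_of_mem_edges heC
  have hyC : y ∈ C.support := C.snd_mem_support_of_mem_edges heC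
  have hk3 : 3 ≤ k := by
    obtain ⟨_, C', hC', _, _, hl'⟩ := hD u u ⟨w0, C, hC, huC, huC⟩
    have := hC'.three_le_length
    omega
  -- short cycle through u and x
  obtain ⟨w1, C1, hC1, huC1, hxC1, hlen1⟩ := hD u x ⟨w0, C, hC, huC, hxC⟩
  by_cases he1 : s(x, y) ∈ C1.edges
  · exact ⟨w1, C1, hC1, huC1, he1, by omega⟩
  by_cases hy1 : y ∈ C1.support
  · obtain ⟨z, D, hDc, heD, huD, hlD⟩ := attach_vertex hC1 hxC1 hy1 hxy he1 u huC1
    exact ⟨z, D, hDc, huD, heD, by omega⟩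
  -- short cycle through u and y
  obtain ⟨w2, C2, hC2, huC2, hyC2, hlen2⟩ := hD u y ⟨w0, C, hC, huC, hyC⟩
  by_cases he2 : s(x, y) ∈ C2.edges
  · exact ⟨w2, C2, hC2, huC2, he2, by omega⟩
  by_cases hx2 : x ∈ C2.support
  · obtain ⟨z, D, hDc, heD, huD, hlD⟩ := attach_vertex hC2 hx2 hyC2 hxy he2 u huC2
    exact ⟨z, D, hDc, huD, heD, by omega⟩
  -- main case: y ∉ C1, x ∉ C2
  have huy : u ≠ y := fun hcon => hy1 (hcon ▸ huC1)
  -- split C2 at y and u to get a path P2 : y → u inside C2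
  obtain ⟨P2, Q2, hP2, hQ2, hjP2, hcov2, hP2s, hQ2s, hes2, hP2e, hQ2e, hlen2', hP21, hQ21⟩ :=
    cycle_two_split hC2 hyC2 huC2 (Ne.symm huy)
  -- first hit of C1's support along P2
  obtain ⟨z, W, hW, hzC1, hWfh, hWlen, hWsub⟩ :=
    first_hit {v | v ∈ C1.support} P2 hP2 huC1
  have hzC1' : z ∈ C1.support := hzC1
  have hxW : x ∉ W.support := fun hcon => hx2 (hP2s _ (hWsub x hcon))
  have hzx : z ≠ x := fun hcon => hxW (hcon ▸ W.end_mem_support)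
  -- split C1 at z and x
  obtain ⟨p, q, hp, hq, hjp, hcovp, hpsub, hqsub, hesp, hpe, hqe, hlenp, hp1, hq1⟩ :=
    cycle_two_split hC1 hzC1' hxC1 hzx
  -- arc M : z → x through u
  obtain ⟨M, hM, huM, hMe, hMs, hMlen⟩ :
      ∃ (M : G.Walk z x), M.IsPath ∧ u ∈ M.support ∧ (∀ e, e ∈ M.edges → e ∈ C1.edges) ∧
        (∀ v, v ∈ M.support → v ∈ C1.support) ∧ M.length + 1 ≤ C1.length := by
    rcases hcovp u huC1 with hup | huq
    · exact ⟨p, hp, hup, hpe, hpsub, by omega⟩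
    · refine ⟨q.reverse, hq.reverse, ?_, ?_, ?_, ?_⟩
      · rw [Walk.support_reverse, List.mem_reverse]; exact huq
      · intro e he
        rw [Walk.edges_reverse, List.mem_reverse] at he
        exact hqe _ he
      · intro v hv
        rw [Walk.support_reverse, List.mem_reverse] at hv
        exact hqsub _ hv
      · rw [Walk.length_reverse]; omega
  -- assemble
  have hWM : (W.append M).IsPath := by
    refine path_append hW hM ?_
    intro v hvW hvM
    exact hWfh v hvW (hMs v hvM)
  have hnotedge : s(x, y) ∉ (W.append M).edges := by
    rw [Walk.edges_append, List.mem_append]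
    rintro (hcon | hcon)
    · exact hxW (W.fst_mem_support_of_mem_edges hcon)
    · exact he1 (hMe _ hcon)
  refine ⟨x, Walk.cons hxy (W.append M), ?_, ?_, ?_, ?_⟩
  · rw [Walk.cons_isCycle_iff]
    exact ⟨hWM, hnotedge⟩
  · rw [Walk.support_cons, List.mem_cons, Walk.mem_support_append_iff]
    exact Or.inr (Or.inr huM)
  · rw [Walk.edges_cons]
    exact List.mem_cons_self
  · rw [Walk.length_cons, Walk.length_append]
    omega

/-- Two edges sharing the vertex `v`. -/
private lemma edge_edge_shared (k : ℕ)
    (hD : ∀ u w : V,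
      (∃ (x : V) (c : G.Walk x x), c.IsCycle ∧ u ∈ c.support ∧ w ∈ c.support) →
      ∃ (x : V) (c : G.Walk x x), c.IsCycle ∧ u ∈ c.support ∧ w ∈ c.support ∧
        c.length ≤ k)
    (v b' d' : V) (h1 : G.Adj v b') (h2 : G.Adj v d')
    (h : ∃ (w : V) (c : G.Walk w w), c.IsCycle ∧ s(v, b') ∈ c.edges ∧ s(v, d') ∈ c.edges) :
    ∃ (w : V) (c : G.Walk w w), c.IsCycle ∧ s(v, b') ∈ c.edges ∧ s(v, d') ∈ c.edges ∧
      c.length ≤ 2 * k := by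
  obtain ⟨w0, C, hC, he1C, he2C⟩ := h
  have hbC : b' ∈ C.support := C.snd_mem_support_of_mem_edges he1C
  obtain ⟨w1, A, hA, hbA, he2A, hlenA⟩ :=
    vertex_edge k hD b' v d' h2 ⟨w0, C, hC, hbC, he2C⟩
  by_cases he1A : s(v, b') ∈ A.edges
  · exact ⟨w1, A, hA, he1A, he2A, hlenA⟩
  · have hvA : v ∈ A.support := A.fst_mem_support_of_mem_edges he2A
    obtain ⟨z, D, hDc, he1D, he2D, hlD⟩ := attach_edge hA hvA hbA h1 he1A _ he2A
    exact ⟨z, D, hDc, he1D, he2D, by omega⟩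

/-- Two disjoint edges. -/
private lemma edge_edge_main (k : ℕ)
    (hD : ∀ u w : V,
      (∃ (x : V) (c : G.Walk x x), c.IsCycle ∧ u ∈ c.support ∧ w ∈ c.support) →
      ∃ (x : V) (c : G.Walk x x), c.IsCycle ∧ u ∈ c.support ∧ w ∈ c.support ∧
        c.length ≤ k)
    (a b c d : V) (hab : G.Adj a b) (hcd : G.Adj c d)
    (hac : a ≠ c) (had : a ≠ d) (hbc : b ≠ c) (hbd : b ≠ d)
    (h : ∃ (w : V) (C : G.Walk w w), C.IsCycle ∧ s(a, b) ∈ C.edges ∧ s(c, d) ∈ C.edges) :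
    ∃ (w : V) (C : G.Walk w w), C.IsCycle ∧ s(a, b) ∈ C.edges ∧ s(c, d) ∈ C.edges ∧
      C.length ≤ 3 * k := by
  obtain ⟨w0, C, hC, he1C, he2C⟩ := h
  have haC : a ∈ C.support := C.fst_mem_support_of_mem_edges he1C
  have hbC : b ∈ C.support := C.snd_mem_support_of_mem_edges he1C
  have hcC : c ∈ C.support := C.fst_mem_support_of_mem_edges he2C
  have hk3 : 3 ≤ k := by
    obtain ⟨_, C', hC', _, _, hl'⟩ := hD a a ⟨w0, C, hC, haC, haC⟩
    have := hC'.three_le_length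
    omega
  -- cycle through a and edge cd, of length ≤ 2k
  obtain ⟨w1, A, hA, haA, he2A, hlenA⟩ :=
    vertex_edge k hD a c d hcd ⟨w0, C, hC, haC, he2C⟩
  by_cases he1A : s(a, b) ∈ A.edges
  · exact ⟨w1, A, hA, he1A, he2A, by omega⟩
  by_cases hbA : b ∈ A.support
  · obtain ⟨z, D, hDc, he1D, he2D, hlD⟩ := attach_edge hA haA hbA hab he1A _ he2A
    exact ⟨z, D, hDc, he1D, he2D, by omega⟩
  -- main case : b ∉ A
  have hcA : c ∈ A.support := A.fst_mem_support_of_mem_edges he2A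
  -- short cycle through b and c
  obtain ⟨w2, B, hB, hbB, hcB, hlenB⟩ := hD b c ⟨w0, C, hC, hbC, hcC⟩
  -- split it at b, c; choose the arc avoiding a
  obtain ⟨p, q, hp, hq, hjp, hcovp, hpsub, hqsub, hesp, hpe, hqe, hlenp, hp1, hq1⟩ :=
    cycle_two_split hB hbB hcB hbc
  obtain ⟨T, hT, haT, hTlen, hTsub⟩ :
      ∃ (T : G.Walk b c), T.IsPath ∧ a ∉ T.support ∧ T.length + 1 ≤ B.length ∧
        (∀ x, x ∈ T.support → x ∈ B.support) := by
    by_cases hap : a ∈ p.support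
    · have haq : a ∉ q.support := by
        intro hcon
        rcases hjp a hap hcon with h' | h'
        · exact hab.ne h'
        · exact hac h'
      refine ⟨q.reverse, hq.reverse, ?_, ?_, ?_⟩
      · rw [Walk.support_reverse, List.mem_reverse]; exact haq
      · rw [Walk.length_reverse]; omega
      · intro x hx
        rw [Walk.support_reverse, List.mem_reverse] at hx
        exact hqsub _ hx
    · exact ⟨p, hp, hap, by omega, hpsub⟩
  -- first hit of A's support along T
  obtain ⟨z, W, hW, hzA, hWfh, hWlen, hWsub⟩ :=
    first_hit {v | v ∈ A.support} T hT hcA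
  have hzA' : z ∈ A.support := hzA
  have haW : a ∉ W.support := fun hcon => haT (hWsub a hcon)
  have hza : z ≠ a := fun hcon => haW (hcon ▸ W.end_mem_support)
  -- split A at z and a; arc M : z → a containing edge cd
  obtain ⟨p', q', hp', hq', hjp', hcovp', hpsub', hqsub', hesp', hpe', hqe', hlenp', hp1', hq1'⟩ :=
    cycle_two_split hA hzA' haA hza
  obtain ⟨M, hM, heM, hMe, hMs, hMlen⟩ :
      ∃ (M : G.Walk z a), M.IsPath ∧ s(c, d) ∈ M.edges ∧ (∀ e, e ∈ M.edges → e ∈ A.edges) ∧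
        (∀ v, v ∈ M.support → v ∈ A.support) ∧ M.length + 1 ≤ A.length := by
    rcases hesp' _ he2A with hep | heq
    · exact ⟨p', hp', hep, hpe', hpsub', by omega⟩
    · refine ⟨q'.reverse, hq'.reverse, ?_, ?_, ?_, ?_⟩
      · rw [Walk.edges_reverse, List.mem_reverse]; exact heq
      · intro e he
        rw [Walk.edges_reverse, List.mem_reverse] at he
        exact hqe' _ he
      · intro v hv
        rw [Walk.support_reverse, List.mem_reverse] at hv
        exact hqsub' _ hv
      · rw [Walk.length_reverse]; omega
  -- assemble
  have hWM : (W.append M).IsPath := by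
    refine path_append hW hM ?_
    intro v hvW hvM
    exact hWfh v hvW (hMs v hvM)
  have hnotedge : s(a, b) ∉ (W.append M).edges := by
    rw [Walk.edges_append, List.mem_append]
    rintro (hcon | hcon)
    · exact haW (W.fst_mem_support_of_mem_edges hcon)
    · exact he1A (hMe _ hcon)
  refine ⟨a, Walk.cons hab (W.append M), ?_, ?_, ?_, ?_⟩
  · rw [Walk.cons_isCycle_iff]
    exact ⟨hWM, hnotedge⟩
  · rw [Walk.edges_cons]
    exact List.mem_cons_self
  · rw [Walk.edges_cons]
    refine List.mem_cons_of_mem _ ?_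
    rw [Walk.edges_append, List.mem_append]
    exact Or.inr heM
  · rw [Walk.length_cons, Walk.length_append]
    omega

theorem stmt6 {V : Type} (G : SimpleGraph V) (D' : ℕ)
    (hD : ∀ u w : V,
      (∃ (x : V) (c : G.Walk x x), c.IsCycle ∧ u ∈ c.support ∧ w ∈ c.support) →
      ∃ (x : V) (c : G.Walk x x), c.IsCycle ∧ u ∈ c.support ∧ w ∈ c.support ∧
        c.length ≤ D')
    (e1 e2 : Sym2 V)
    (h : ∃ (x : V) (c : G.Walk x x), c.IsCycle ∧ e1 ∈ c.edges ∧ e2 ∈ c.edges) :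
    ∃ (x : V) (c : G.Walk x x), c.IsCycle ∧ e1 ∈ c.edges ∧ e2 ∈ c.edges ∧
      c.length ≤ 3 * D' := by
  classical
  obtain ⟨x0, C, hC, he1C, he2C⟩ := h
  revert he1C he2C
  refine Sym2.inductionOn₂ e1 e2 ?_
  intro a b c d he1C he2C
  have hab : G.Adj a b := C.adj_of_mem_edges he1C
  have hcd : G.Adj c d := C.adj_of_mem_edges he2C
  have haC : a ∈ C.support := C.fst_mem_support_of_mem_edges he1C
  have hbC : b ∈ C.support := C.snd_mem_support_of_mem_edges he1C
  have hk3 : 3 ≤ D' := by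
    obtain ⟨_, C', hC', _, _, hl'⟩ := hD a a ⟨x0, C, hC, haC, haC⟩
    have := hC'.three_le_length
    omega
  by_cases heq : s(a, b) = s(c, d)
  · -- e1 = e2
    obtain ⟨w1, C1, hC1, haC1, hbC1, hlen1⟩ := hD a b ⟨x0, C, hC, haC, hbC⟩
    by_cases he : s(a, b) ∈ C1.edges
    · exact ⟨w1, C1, hC1, he, by rw [← heq]; exact he, by omega⟩
    · obtain ⟨z, D, hDc, heD, _, hlD⟩ := attach_vertex hC1 haC1 hbC1 hab he a haC1
      exact ⟨z, D, hDc, heD, by rw [← heq]; exact heD, by omega⟩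
  by_cases hac : a = c
  · subst hac
    have hcomm : ∃ (w : V) (c' : G.Walk w w), c'.IsCycle ∧ s(a, b) ∈ c'.edges ∧
        s(a, d) ∈ c'.edges := ⟨x0, C, hC, he1C, he2C⟩
    obtain ⟨z, D, hDc, h1D, h2D, hlD⟩ := edge_edge_shared D' hD a b d hab hcd hcomm
    exact ⟨z, D, hDc, h1D, h2D, by omega⟩
  by_cases had : a = d
  · subst had
    have hcomm : ∃ (w : V) (c' : G.Walk w w), c'.IsCycle ∧ s(a, b) ∈ c'.edges ∧
        s(a, c) ∈ c'.edges := ⟨x0, C, hC, he1C, by rw [Sym2.eq_swap]; exact he2C⟩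
    obtain ⟨z, D, hDc, h1D, h2D, hlD⟩ := edge_edge_shared D' hD a b c hab hcd.symm hcomm
    exact ⟨z, D, hDc, h1D, by rw [Sym2.eq_swap]; exact h2D, by omega⟩
  by_cases hbc : b = c
  · subst hbc
    have hcomm : ∃ (w : V) (c' : G.Walk w w), c'.IsCycle ∧ s(b, a) ∈ c'.edges ∧
        s(b, d) ∈ c'.edges := ⟨x0, C, hC, by rw [Sym2.eq_swap]; exact he1C, he2C⟩
    obtain ⟨z, D, hDc, h1D, h2D, hlD⟩ := edge_edge_shared D' hD b a d hab.symm hcd hcomm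
    exact ⟨z, D, hDc, by rw [Sym2.eq_swap]; exact h1D, h2D, by omega⟩
  by_cases hbd : b = d
  · subst hbd
    have hcomm : ∃ (w : V) (c' : G.Walk w w), c'.IsCycle ∧ s(b, a) ∈ c'.edges ∧
        s(b, c) ∈ c'.edges :=
      ⟨x0, C, hC, by rw [Sym2.eq_swap]; exact he1C, by rw [Sym2.eq_swap]; exact he2C⟩
    obtain ⟨z, D, hDc, h1D, h2D, hlD⟩ := edge_edge_shared D' hD b a c hab.symm hcd.symm hcomm
    exact ⟨z, D, hDc, by rw [Sym2.eq_swap]; exact h1D, by rw [Sym2.eq_swap]; exact h2D, by omega⟩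
  · exact edge_edge_main D' hD a b c d hab hcd hac had hbc hbd ⟨x0, C, hC, he1C, he2C⟩
end

section
/- For all u, w ∈ V' = V \ {r}, the vertices u and w lie in the same connected component of the auxiliary graph G' if and only if u = w or there is a simple cycle in G containing both edges {u, p(u)} and {w, p(w)}. -/
open Function

/-- The auxiliary graph `G'` on `V' = V \ {r}` (with `r` isolated): edges are
(i) `{v, p v}` for `v ≠ r` such that some edge `{x, y}` of `G` has `x` in the subtree of `v`
and `y` outside the subtree of `p v`; (ii) non-tree edges `{u, v}` of `G` such that neither
endpoint is an ancestor of the other. -/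
def auxGraph {V : Type} (G : SimpleGraph V) (p : V → V) (r : V) : SimpleGraph V :=
  SimpleGraph.fromRel (fun a b =>
    (a ≠ r ∧ b = p a ∧ ∃ x y, G.Adj x y ∧ IsAncestor p a x ∧ ¬ IsAncestor p (p a) y)
    ∨ (G.Adj a b ∧ p a ≠ b ∧ p b ≠ a ∧ ¬ IsAncestor p a b ∧ ¬ IsAncestor p b a))

section AncLib

open Function

variable {V : Type} {p : V → V} {r : V}

lemma anc_refl (v : V) : IsAncestor p v v := ⟨0, rfl⟩

lemma anc_trans {a b c : V} (h1 : IsAncestor p a b) (h2 : IsAncestor p b c) :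
    IsAncestor p a c := by
  obtain ⟨i, hi⟩ := h1; obtain ⟨j, hj⟩ := h2
  exact ⟨i + j, by rw [Function.iterate_add_apply, hj, hi]⟩

lemma anc_parent (v : V) : IsAncestor p (p v) v := ⟨1, rfl⟩

lemma root_anc (hstab : ∀ v : V, ∃ i : ℕ, p^[i + 1] v = p^[i] v)
    (hroot : ∀ v : V, p v = v → v = r) (v : V) : IsAncestor p r v := by
  obtain ⟨i, hi⟩ := hstab v
  refine ⟨i, hroot _ ?_⟩
  rw [← Function.iterate_succ_apply' p i v]; exact hi

lemma anc_root_eq (hr : p r = r) {z : V} (h : IsAncestor p z r) : z = r := by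
  obtain ⟨i, hi⟩ := h
  rw [Function.iterate_fixed hr] at hi; exact hi.symm

lemma eq_root_of_periodic (hstab : ∀ v : V, ∃ i : ℕ, p^[i + 1] v = p^[i] v)
    (hr : p r = r) (hroot : ∀ v : V, p v = v → v = r)
    {x : V} {m : ℕ} (hm : 1 ≤ m) (h : p^[m] x = x) : x = r := by
  obtain ⟨i, hi⟩ := root_anc hstab hroot x
  have hper : ∀ k : ℕ, p^[k * m] x = x := by
    intro k; induction k with
    | zero => simp
    | succ k ih => rw [Nat.succ_mul, Function.iterate_add_apply, h, ih]
  have h1 : p^[i * m] x = x := hper i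
  have h2 : i ≤ i * m := Nat.le_mul_of_pos_right i (by omega)
  have h3 : p^[i * m] x = p^[i * m - i] (p^[i] x) := by
    rw [← Function.iterate_add_apply]; congr 1; omega
  rw [h1, hi, Function.iterate_fixed hr] at h3
  exact h3

lemma anc_antisymm (hstab : ∀ v : V, ∃ i : ℕ, p^[i + 1] v = p^[i] v)
    (hr : p r = r) (hroot : ∀ v : V, p v = v → v = r)
    {a b : V} (h1 : IsAncestor p a b) (h2 : IsAncestor p b a) : a = b := by
  obtain ⟨i, hi⟩ := h1; obtain ⟨j, hj⟩ := h2
  rcases Nat.eq_zero_or_pos (j + i) with h | h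
  · have : j = 0 := by omega
    subst this; exact hj.symm ▸ hi.symm ▸ rfl
  · have hb : p^[j + i] b = b := by rw [Function.iterate_add_apply, hi, hj]
    have hbr : b = r := eq_root_of_periodic hstab hr hroot h hb
    subst hbr
    rw [Function.iterate_fixed hr] at hi
    exact hi.symm

lemma anc_of_anc_ne {z v : V} (h : IsAncestor p z v) (hne : z ≠ v) :
    IsAncestor p z (p v) := by
  obtain ⟨i, hi⟩ := h
  cases i with
  | zero => exact absurd hi.symm hne
  | succ k => exact ⟨k, by rw [← Function.iterate_succ_apply]; exact hi⟩

lemma ne_root_of_strict (hr : p r = r) {z v : V} (h : IsAncestor p z v) (hne : z ≠ v) :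
    v ≠ r := by
  rintro rfl
  exact hne (anc_root_eq hr h)

lemma anc_comparable {a b v : V} (h1 : IsAncestor p a v) (h2 : IsAncestor p b v) :
    IsAncestor p a b ∨ IsAncestor p b a := by
  obtain ⟨i, hi⟩ := h1; obtain ⟨j, hj⟩ := h2
  rcases le_total i j with h | h
  · right
    refine ⟨j - i, ?_⟩
    rw [← hi, ← Function.iterate_add_apply, ← hj]
    congr 1; omega
  · left
    refine ⟨i - j, ?_⟩
    rw [← hj, ← Function.iterate_add_apply, ← hi]
    congr 1; omega

lemma children_unique (hstab : ∀ v : V, ∃ i : ℕ, p^[i + 1] v = p^[i] v)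
    (hr : p r = r) (hroot : ∀ v : V, p v = v → v = r)
    {x y z v : V} (hx : p x = z) (hy : p y = z) (hxz : x ≠ z) (hyz : y ≠ z)
    (hxv : IsAncestor p x v) (hyv : IsAncestor p y v) : x = y := by
  have key : ∀ a b : V, p a = z → a ≠ z → IsAncestor p a b → p b = z → a = b := by
    intro a b hpa haz hab hpb
    obtain ⟨m, hm⟩ := hab
    cases m with
    | zero => exact hm.symm
    | succ k =>
      exfalso
      have : p^[k] z = a := by
        rw [← hpb, ← Function.iterate_succ_apply]; exact hm
      exact haz (anc_antisymm hstab hr hroot ⟨k, this⟩ ⟨1, hpa⟩)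
  rcases anc_comparable hxv hyv with h | h
  · exact key x y hx hxz h hy
  · exact (key y x hy hyz h hx).symm

/-- number of steps from `v` up to its ancestor `z`. -/
noncomputable def upSteps (p : V → V) (z v : V) : ℕ := sInf {i : ℕ | p^[i] v = z}

lemma upSteps_spec {z v : V} (h : IsAncestor p z v) : p^[upSteps p z v] v = z :=
  Nat.sInf_mem h

lemma upSteps_min {z v : V} {j : ℕ} (h : p^[j] v = z) : upSteps p z v ≤ j :=
  Nat.sInf_le h

lemma upSteps_pos {z v : V} (h : IsAncestor p z v) (hne : v ≠ z) : 1 ≤ upSteps p z v := by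
  by_contra hcon
  have h0 : upSteps p z v = 0 := by omega
  have := upSteps_spec h
  rw [h0] at this
  exact hne this

/-- the child of `z` on the way down to `v`. -/
noncomputable def down (p : V → V) (z v : V) : V := p^[upSteps p z v - 1] v

lemma down_anc {z v : V} : IsAncestor p (down p z v) v := ⟨_, rfl⟩

lemma parent_down {z v : V} (h : IsAncestor p z v) (hne : v ≠ z) : p (down p z v) = z := by
  have h1 := upSteps_pos h hne
  rw [down]
  have h2 : p (p^[upSteps p z v - 1] v) = p^[upSteps p z v - 1 + 1] v :=
    (Function.iterate_succ_apply' p _ v).symm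
  rw [h2]
  have h3 : upSteps p z v - 1 + 1 = upSteps p z v := by omega
  rw [h3]; exact upSteps_spec h

lemma down_ne {z v : V} (h : IsAncestor p z v) (hne : v ≠ z) : down p z v ≠ z := by
  intro hEq
  have h1 := upSteps_pos h hne
  have := upSteps_min (z := z) (v := v) hEq
  omega

lemma anc_down {z v : V} (h : IsAncestor p z v) (hne : v ≠ z) :
    IsAncestor p z (down p z v) := ⟨1, parent_down h hne⟩

lemma down_unique (hstab : ∀ v : V, ∃ i : ℕ, p^[i + 1] v = p^[i] v)
    (hr : p r = r) (hroot : ∀ v : V, p v = v → v = r)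
    {z v c : V} (h : IsAncestor p z v) (hne : v ≠ z)
    (hc : p c = z) (hcz : c ≠ z) (hcv : IsAncestor p c v) : c = down p z v :=
  children_unique hstab hr hroot hc (parent_down h hne) hcz (down_ne h hne) hcv down_anc

open Classical in
/-- projection of `v` to the cycle pivot `z`'s children (or to `z`). -/
noncomputable def proj (p : V → V) (z v : V) : V :=
  if IsAncestor p z v ∧ v ≠ z then down p z v else z

lemma proj_of_anc {z v : V} (h : IsAncestor p z v) (hne : v ≠ z) :
    proj p z v = down p z v := if_pos ⟨h, hne⟩

lemma proj_of_not_anc {z v : V} (h : ¬ IsAncestor p z v) : proj p z v = z := by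
  rw [proj, if_neg]; tauto

end AncLib
section GpLib

open Function SimpleGraph

variable {V : Type} {G : SimpleGraph V} {p : V → V} {r : V}
variable (hstab : ∀ v : V, ∃ i : ℕ, p^[i + 1] v = p^[i] v)
variable (hr : p r = r) (hroot : ∀ v : V, p v = v → v = r)

set_option linter.unusedSectionVars false
include hstab hr hroot

lemma adj_up {v x y : V} (hv : v ≠ r) (hxy : G.Adj x y)
    (hvx : IsAncestor p v x) (hpy : ¬ IsAncestor p (p v) y) :
    (auxGraph G p r).Adj v (p v) := by
  rw [auxGraph, SimpleGraph.fromRel_adj]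
  refine ⟨fun h => hv (hroot v h.symm), Or.inl (Or.inl ⟨hv, rfl, x, y, hxy, hvx, hpy⟩)⟩

lemma adj_cross {a b : V} (hxy : G.Adj a b) (h1 : p a ≠ b) (h2 : p b ≠ a)
    (h3 : ¬ IsAncestor p a b) (h4 : ¬ IsAncestor p b a) :
    (auxGraph G p r).Adj a b := by
  rw [auxGraph, SimpleGraph.fromRel_adj]
  exact ⟨hxy.ne, Or.inl (Or.inr ⟨hxy, h1, h2, h3, h4⟩)⟩

lemma not_adj_root (a : V) : ¬ (auxGraph G p r).Adj a r := by
  rw [auxGraph, SimpleGraph.fromRel_adj]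
  rintro ⟨hne, (⟨har, hpr, x, y, hxy, hax, hpay⟩ | ⟨_, _, _, _, h4⟩) |
    (⟨hrr, _⟩ | ⟨_, _, _, h3, _⟩)⟩
  · exact hpay (hpr ▸ root_anc hstab hroot y)
  · exact h4 (root_anc hstab hroot a)
  · exact hrr rfl
  · exact h3 (root_anc hstab hroot a)

/-- chain lemma: walk up from `x` towards an ancestor `c` that is not an ancestor of the
other endpoint `y` of a `G`-edge at `x`, through type (i) edges of `G'`. -/
lemma chain {x y : V} (hxy : G.Adj x y) :
    ∀ (i : ℕ) (c : V), p^[i] x = c → ¬ IsAncestor p c y →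
      (auxGraph G p r).Reachable x c := by
  intro i
  induction i with
  | zero => rintro c rfl _; rfl
  | succ i ih =>
    rintro c hc hcy
    set c' := p^[i] x with hc'
    have hpc' : p c' = c := by
      rw [hc']
      have h9 : p (p^[i] x) = p^[i + 1] x := (Function.iterate_succ_apply' p i x).symm
      rw [h9]; exact hc
    have hc'y : ¬ IsAncestor p c' y := by
      intro h
      exact hcy (hpc' ▸ anc_trans (anc_parent c') h)
    have h1 : (auxGraph G p r).Reachable x c' := ih c' rfl hc'y
    have hc'r : c' ≠ r := by
      intro h
      apply hcy
      rw [← hpc', h, hr]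
      exact root_anc hstab hroot y
    have h2 : (auxGraph G p r).Adj c' (p c') :=
      adj_up hstab hr hroot hc'r hxy ⟨i, hc'.symm⟩ (hpc' ▸ hcy)
    exact h1.trans (hpc' ▸ h2.reachable)

lemma chain' {x y c : V} (hxy : G.Adj x y) (hanc : IsAncestor p c x)
    (hcy : ¬ IsAncestor p c y) : (auxGraph G p r).Reachable x c := by
  obtain ⟨i, hi⟩ := hanc
  exact chain hstab hr hroot hxy i c hi hcy

/-- the STEP lemma: a `G`-edge not touching the pivot `z` connects the projections. -/
lemma step {a b z : V} (hab : G.Adj a b) (haz : a ≠ z) (hbz : b ≠ z) :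
    (auxGraph G p r).Reachable (proj p z a) (proj p z b) := by
  have main : ∀ a b : V, G.Adj a b → a ≠ z → b ≠ z → IsAncestor p z a → ¬ IsAncestor p z b →
      (auxGraph G p r).Reachable (proj p z a) (proj p z b) := by
    intro a b hab haz hbz ha hb
    rw [proj_of_anc ha haz, proj_of_not_anc hb]
    have h1 : (auxGraph G p r).Reachable a (down p z a) := by
      refine chain' hstab hr hroot hab down_anc ?_
      intro h
      exact hb (anc_trans (anc_down ha haz) h)
    have h2 : (auxGraph G p r).Reachable a z := chain' hstab hr hroot hab ha hb
    exact h1.symm.trans h2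
  by_cases ha : IsAncestor p z a <;> by_cases hb : IsAncestor p z b
  · -- both below z
    rw [proj_of_anc ha haz, proj_of_anc hb hbz]
    by_cases hcc : down p z a = down p z b
    · rw [hcc]
    · have hpa : p (down p z a) = z := parent_down ha haz
      have hpb : p (down p z b) = z := parent_down hb hbz
      have hca : down p z a ≠ z := down_ne ha haz
      have hcb : down p z b ≠ z := down_ne hb hbz
      have hnab : ¬ IsAncestor p a b := by
        intro h
        exact hcc (children_unique hstab hr hroot hpa hpb hca hcb
          (anc_trans down_anc h) down_anc)
      have hnba : ¬ IsAncestor p b a := by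
        intro h
        exact hcc (children_unique hstab hr hroot hpa hpb hca hcb
          down_anc (anc_trans down_anc h))
      have hpab : p a ≠ b := fun h => hnba ⟨1, h⟩
      have hpba : p b ≠ a := fun h => hnab ⟨1, h⟩
      have hcross : (auxGraph G p r).Adj a b := adj_cross hstab hr hroot hab hpab hpba hnab hnba
      have h1 : (auxGraph G p r).Reachable a (down p z a) := by
        refine chain' hstab hr hroot hab down_anc ?_
        intro h
        exact hcc (children_unique hstab hr hroot hpa hpb hca hcb h down_anc)
      have h2 : (auxGraph G p r).Reachable b (down p z b) := by
        refine chain' hstab hr hroot hab.symm down_anc ?_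
        intro h
        exact hcc (children_unique hstab hr hroot hpa hpb hca hcb down_anc h)
      exact h1.symm.trans (hcross.reachable.trans h2)
  · exact main a b hab haz hbz ha hb
  · exact (main b a hab.symm hbz haz hb ha).symm
  · rw [proj_of_not_anc ha, proj_of_not_anc hb]

end GpLib
section GpLib2

open Function SimpleGraph

variable {V : Type} [DecidableEq V] {G : SimpleGraph V} {p : V → V} {r : V}
variable (hstab : ∀ v : V, ∃ i : ℕ, p^[i + 1] v = p^[i] v)
variable (hr : p r = r) (hroot : ∀ v : V, p v = v → v = r)

set_option linter.unusedSectionVars false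
include hstab hr hroot

lemma walk_proj {z a b : V} (W : G.Walk a b) (hz : z ∉ W.support) :
    (auxGraph G p r).Reachable (proj p z a) (proj p z b) := by
  induction W with
  | nil => rfl
  | @cons u v w h q ih =>
    rw [SimpleGraph.Walk.support_cons, List.mem_cons] at hz
    push_neg at hz
    exact (step hstab hr hroot h (Ne.symm hz.1)
      (fun e => hz.2 (e ▸ q.start_mem_support))).trans (ih hz.2)

lemma walk_proj₂ {z a b u w : V} (W : G.Walk a b) (hz : z ∉ W.support)
    (hu : u ∈ W.support) (hw : w ∈ W.support) :
    (auxGraph G p r).Reachable (proj p z u) (proj p z w) := by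
  have h1 := walk_proj hstab hr hroot (W.takeUntil u hu)
    (fun hc => hz (W.support_takeUntil_subset hu hc))
  have h2 := walk_proj hstab hr hroot (W.takeUntil w hw)
    (fun hc => hz (W.support_takeUntil_subset hw hc))
  exact h1.symm.trans h2

omit hstab hr hroot in
lemma not_mem_takeUntil {a b u : V} (T : G.Walk a b) (hT : T.IsPath)
    (hu : u ∈ T.support) (hub : u ≠ b) : b ∉ (T.takeUntil u hu).support := by
  intro hb
  have hsplit := T.take_spec hu
  have hbd : b ∈ (T.dropUntil u hu).support := by
    have := (T.dropUntil u hu).end_mem_support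
    exact this
  have hbd' : b ∈ (T.dropUntil u hu).support.tail := by
    rw [SimpleGraph.Walk.support_eq_cons (T.dropUntil u hu)] at hbd
    rcases List.mem_cons.mp hbd with h | h
    · exact absurd h.symm hub
    · exact h
  have hnodup : T.support.Nodup := hT.support_nodup
  rw [← hsplit, SimpleGraph.Walk.support_append] at hnodup
  exact (List.disjoint_of_nodup_append hnodup) hb hbd'

lemma cycle_pivot_aux {z u w : V} (D : G.Walk z z) (hD : D.IsCycle)
    (hu : u ∈ D.support) (hw : w ∈ D.support) (huz : u ≠ z) (hwz : w ≠ z) :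
    (auxGraph G p r).Reachable (proj p z u) (proj p z w) := by
  cases D with
  | nil => exact absurd rfl hD.ne_nil
  | @cons _ s₂ _ hadj T =>
    have hT : T.IsPath ∧ s(z, s₂) ∉ T.edges := (SimpleGraph.Walk.cons_isCycle_iff T hadj).mp hD
    have hu' : u ∈ T.support := by
      rcases List.mem_cons.mp (by simpa using hu) with h | h
      · exact absurd h huz
      · exact h
    have hw' : w ∈ T.support := by
      rcases List.mem_cons.mp (by simpa using hw) with h | h
      · exact absurd h hwz
      · exact h
    have h1 := walk_proj hstab hr hroot (T.takeUntil u hu')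
      (not_mem_takeUntil T hT.1 hu' huz)
    have h2 := walk_proj hstab hr hroot (T.takeUntil w hw')
      (not_mem_takeUntil T hT.1 hw' hwz)
    exact h1.symm.trans h2

omit hstab hr hroot in
lemma mem_tail_closed {s : V} {C : G.Walk s s} (hne : C ≠ SimpleGraph.Walk.nil) {x : V} :
    x ∈ C.support ↔ x ∈ C.support.tail := by
  cases C with
  | nil => exact absurd rfl hne
  | cons h T =>
    simp only [SimpleGraph.Walk.support_cons, List.tail_cons, List.mem_cons]
    constructor
    · rintro (rfl | h')
      · exact T.end_mem_support
      · exact h'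
    · exact fun h' => Or.inr h'

omit hstab hr hroot in
lemma mem_support_rotate_s7 {s z : V} {C : G.Walk s s} (hC : C.IsCycle) (hz : z ∈ C.support)
    {x : V} : x ∈ (C.rotate z hz).support ↔ x ∈ C.support := by
  rw [mem_tail_closed (hC.rotate hz).ne_nil, mem_tail_closed hC.ne_nil]
  exact (SimpleGraph.Walk.support_rotate C _ hz).mem_iff

lemma cycle_proj {z s u w : V} (C : G.Walk s s) (hC : C.IsCycle)
    (hu : u ∈ C.support) (hw : w ∈ C.support) (huz : u ≠ z) (hwz : w ≠ z) :
    (auxGraph G p r).Reachable (proj p z u) (proj p z w) := by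
  by_cases hz : z ∈ C.support
  · exact cycle_pivot_aux hstab hr hroot (C.rotate z hz) (hC.rotate hz)
      ((mem_support_rotate_s7 hC hz).mpr hu) ((mem_support_rotate_s7 hC hz).mpr hw) huz hwz
  · exact walk_proj₂ hstab hr hroot C hz hu hw

lemma reach_anc {s : V} (C : G.Walk s s) (hC : C.IsCycle) :
    ∀ (n : ℕ) (u c m : V), u ∈ C.support → m ∈ C.support → p^[n] u = c →
      ¬ IsAncestor p c m → (auxGraph G p r).Reachable u c := by
  intro n
  induction n using Nat.strong_induction_on with
  | _ n ih =>
    intro u c m hu hm hn hcm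
    by_cases huc : u = c
    · exact huc ▸ SimpleGraph.Reachable.refl u
    · have hanc : IsAncestor p c u := ⟨n, hn⟩
      have hk1 : 1 ≤ upSteps p c u := upSteps_pos hanc huc
      have hkn : upSteps p c u ≤ n := upSteps_min hn
      have hmc : m ≠ c := by
        intro e; apply hcm; rw [e]; exact anc_refl c
      have h1 : (auxGraph G p r).Reachable (proj p c u) (proj p c m) :=
        cycle_proj hstab hr hroot C hC hu hm huc hmc
      rw [proj_of_anc hanc huc, proj_of_not_anc hcm] at h1
      have h2 : (auxGraph G p r).Reachable u (down p c u) := by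
        refine ih (upSteps p c u - 1) (by omega) u (down p c u) m hu hm rfl ?_
        intro h
        exact hcm (anc_trans (anc_down hanc huc) h)
      exact h2.trans h1

lemma mp_rev {s u w : V} (C : G.Walk s s) (hC : C.IsCycle)
    (hu : s(u, p u) ∈ C.edges) (hw : s(w, p w) ∈ C.edges)
    (hur : u ≠ r) (hwr : w ≠ r) : (auxGraph G p r).Reachable u w := by
  have hus : u ∈ C.support := C.fst_mem_support_of_mem_edges hu
  have hpus : p u ∈ C.support := C.snd_mem_support_of_mem_edges hu
  have hws : w ∈ C.support := C.fst_mem_support_of_mem_edges hw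
  have hpws : p w ∈ C.support := C.snd_mem_support_of_mem_edges hw
  have hself : ∀ v : V, v ≠ r → ¬ IsAncestor p v (p v) := by
    rintro v hv ⟨j, hj⟩
    refine hv (eq_root_of_periodic hstab hr hroot (m := j + 1) (by omega) ?_)
    rw [Function.iterate_succ_apply]; exact hj
  by_cases hij : IsAncestor p u w
  · obtain ⟨n, hn⟩ := hij
    exact (reach_anc hstab hr hroot C hC n w u (p u) hws hpus hn (hself u hur)).symm
  by_cases hji : IsAncestor p w u
  · obtain ⟨n, hn⟩ := hji
    exact reach_anc hstab hr hroot C hC n u w (p w) hus hpws hn (hself w hwr)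
  -- incomparable case
  have hSne : {i : ℕ | IsAncestor p (p^[i] u) w}.Nonempty := by
    obtain ⟨i, hi⟩ := root_anc hstab hroot u
    exact ⟨i, by rw [Set.mem_setOf_eq, hi]; exact root_anc hstab hroot w⟩
  set k := sInf {i : ℕ | IsAncestor p (p^[i] u) w} with hkdef
  have hkS : IsAncestor p (p^[k] u) w := Nat.sInf_mem hSne
  set l := p^[k] u with hl
  have hk1 : 1 ≤ k := by
    rcases Nat.eq_zero_or_pos k with h | h
    · exfalso; apply hij
      have h9 : IsAncestor p (p^[k] u) w := hkS
      rw [h] at h9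
      exact h9
    · omega
  have hcuw : ¬ IsAncestor p (p^[k-1] u) w :=
    Nat.notMem_of_lt_sInf (show k - 1 < k by omega)
  have hpcu : p (p^[k-1] u) = l := by
    have h9 : p (p^[k-1] u) = p^[k-1+1] u := (Function.iterate_succ_apply' p _ u).symm
    rw [h9]; rw [hl]; congr 1; omega
  have hcul : p^[k-1] u ≠ l := fun e => hcuw (e ▸ hkS)
  have hlu : IsAncestor p l u := ⟨k, rfl⟩
  have hul : u ≠ l := by
    intro e
    apply hij; rw [e]; exact hkS
  have hwl : w ≠ l := by
    intro e
    apply hji; rw [e]; exact hlu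
  have hdownu : down p l u = p^[k-1] u :=
    (down_unique hstab hr hroot hlu hul hpcu hcul ⟨k-1, rfl⟩).symm
  have hlw : IsAncestor p l w := hkS
  have hcwu : ¬ IsAncestor p (down p l w) u := by
    rintro ⟨j, hj⟩
    have hjS : j ∈ {i : ℕ | IsAncestor p (p^[i] u) w} := by
      rw [Set.mem_setOf_eq, hj]; exact down_anc
    have hkj : k ≤ j := Nat.sInf_le hjS
    have h1 : IsAncestor p (down p l w) l := by
      refine ⟨j - k, ?_⟩
      rw [hl, ← Function.iterate_add_apply, ← hj]
      congr 1; omega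
    exact (down_ne hlw hwl) (anc_antisymm hstab hr hroot h1 (anc_down hlw hwl))
  have r1 : (auxGraph G p r).Reachable u (p^[k-1] u) :=
    reach_anc hstab hr hroot C hC (k-1) u (p^[k-1] u) w hus hws rfl hcuw
  have r2 : (auxGraph G p r).Reachable w (down p l w) :=
    reach_anc hstab hr hroot C hC (upSteps p l w - 1) w (down p l w) u hws hus rfl hcwu
  have r3 : (auxGraph G p r).Reachable (proj p l u) (proj p l w) :=
    cycle_proj hstab hr hroot C hC hus hws hul hwl
  rw [proj_of_anc hlu hul, proj_of_anc hlw hwl, hdownu] at r3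
  exact r1.trans (r3.trans r2.symm)

end GpLib2
section FundLib

open Function SimpleGraph

variable {V : Type} [DecidableEq V] {G : SimpleGraph V} {p : V → V} {r : V}

lemma range_map_succ {α : Type*} (f : ℕ → α) (n : ℕ) :
    (List.range (n+1)).map f = f 0 :: (List.range n).map (f ∘ Nat.succ) := by
  rw [List.range_succ_eq_map, List.map_cons, List.map_map]

/-- the walk from `v` up the tree for `n` steps. -/
def walkUp (hspan : ∀ v : V, v ≠ r → G.Adj v (p v)) :
    ∀ (n : ℕ) (v : V), (∀ j, j < n → p^[j] v ≠ r) → G.Walk v (p^[n] v)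
  | 0, _, _ => SimpleGraph.Walk.nil
  | n+1, v, h =>
    (SimpleGraph.Walk.cons (hspan v (h 0 (Nat.succ_pos n)))
      (walkUp hspan n (p v) (fun j hj => by
        have h9 := h (j+1) (by omega)
        rwa [Function.iterate_succ_apply] at h9))).copy rfl
      (Function.iterate_succ_apply p n v).symm

lemma walkUp_support (hspan : ∀ v : V, v ≠ r → G.Adj v (p v)) (n : ℕ) (v : V)
    (h : ∀ j, j < n → p^[j] v ≠ r) :
    (walkUp hspan n v h).support = (List.range (n+1)).map (fun j => p^[j] v) := by
  induction n generalizing v with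
  | zero => simp [walkUp]
  | succ n ih =>
    rw [walkUp]
    rw [SimpleGraph.Walk.support_copy, SimpleGraph.Walk.support_cons, ih]
    conv_rhs => rw [range_map_succ]
    have hfun : (List.range (n+1)).map ((fun j => p^[j] v) ∘ Nat.succ)
        = (List.range (n+1)).map (fun j => p^[j] (p v)) :=
      List.map_congr_left (fun j _ => by simp [Function.iterate_succ_apply])
    rw [hfun]
    simp

lemma walkUp_edges (hspan : ∀ v : V, v ≠ r → G.Adj v (p v)) (n : ℕ) (v : V)
    (h : ∀ j, j < n → p^[j] v ≠ r) :
    (walkUp hspan n v h).edges = (List.range n).map (fun j => s(p^[j] v, p^[j+1] v)) := by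
  induction n generalizing v with
  | zero => simp [walkUp]
  | succ n ih =>
    rw [walkUp]
    rw [SimpleGraph.Walk.edges_copy, SimpleGraph.Walk.edges_cons, ih, range_map_succ]
    have hfun : (List.range n).map ((fun j => s(p^[j] v, p^[j+1] v)) ∘ Nat.succ)
        = (List.range n).map (fun j => s(p^[j] (p v), p^[j+1] (p v))) :=
      List.map_congr_left (fun j _ => by simp [Function.iterate_succ_apply])
    rw [hfun]
    simp [Function.iterate_succ_apply]

lemma walkUp_isPath (hstab : ∀ v : V, ∃ i : ℕ, p^[i + 1] v = p^[i] v)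
    (hr : p r = r) (hroot : ∀ v : V, p v = v → v = r)
    (hspan : ∀ v : V, v ≠ r → G.Adj v (p v)) (n : ℕ) (v : V)
    (h : ∀ j, j < n → p^[j] v ≠ r) : (walkUp hspan n v h).IsPath := by
  rw [SimpleGraph.Walk.isPath_def, walkUp_support]
  have key : ∀ i j, i < j → j < n+1 → p^[i] v = p^[j] v → False := by
    intro i j hij hj hEq
    have hper : p^[j - i] (p^[i] v) = p^[i] v := by
      rw [← Function.iterate_add_apply]
      have h9 : j - i + i = j := by omega
      rw [h9, ← hEq]
    have := eq_root_of_periodic hstab hr hroot (by omega) hper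
    exact h i (by omega) this
  refine List.Nodup.map_on ?_ List.nodup_range
  intro i hi j hj hEq
  rw [List.mem_range] at hi hj
  rcases lt_trichotomy i j with h' | h' | h'
  · exact absurd hEq (fun e => key i j h' hj e)
  · exact h'
  · exact absurd hEq (fun e => key j i h' hi e.symm)

variable (hstab : ∀ v : V, ∃ i : ℕ, p^[i + 1] v = p^[i] v)
variable (hr : p r = r) (hroot : ∀ v : V, p v = v → v = r)
variable (hspan : ∀ v : V, v ≠ r → G.Adj v (p v))

set_option linter.unusedSectionVars false
include hstab hr hroot hspan

/-- the fundamental cycle of a non-tree edge `{x, y}`. -/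
lemma fund {x y : V} (hxy : G.Adj x y) (h1 : ¬ IsAncestor p x y) (h2 : p x ≠ y) :
    ∃ (l : V) (kx ky : ℕ), p^[kx] x = l ∧ p^[ky] y = l ∧
      (∀ c, IsAncestor p c x → IsAncestor p c y → IsAncestor p c l) ∧
      ∃ C : G.Walk y y, C.IsCycle ∧
        (∀ j, j < kx → s(p^[j] x, p^[j+1] x) ∈ C.edges) ∧
        (∀ j, j < ky → s(p^[j] y, p^[j+1] y) ∈ C.edges) := by
  classical
  have hSne : {i : ℕ | IsAncestor p (p^[i] x) y}.Nonempty := by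
    obtain ⟨i, hi⟩ := root_anc hstab hroot x
    exact ⟨i, by rw [Set.mem_setOf_eq, hi]; exact root_anc hstab hroot y⟩
  set k := sInf {i : ℕ | IsAncestor p (p^[i] x) y} with hkdef
  have hky : IsAncestor p (p^[k] x) y := Nat.sInf_mem hSne
  have hmin : ∀ c, IsAncestor p c x → IsAncestor p c y → IsAncestor p c (p^[k] x) := by
    rintro c ⟨i, hi⟩ hcy
    have hiS : i ∈ {i : ℕ | IsAncestor p (p^[i] x) y} := by
      rw [Set.mem_setOf_eq, hi]; exact hcy
    have hki : k ≤ i := Nat.sInf_le hiS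
    refine ⟨i - k, ?_⟩
    rw [← Function.iterate_add_apply, ← hi]
    congr 1; omega
  have hbx : ∀ j, j < k → p^[j] x ≠ r := by
    intro j hj hEq
    have : j ∈ {i : ℕ | IsAncestor p (p^[i] x) y} := by
      rw [Set.mem_setOf_eq, hEq]; exact root_anc hstab hroot y
    have := Nat.sInf_le this
    omega
  have hxl : x ≠ p^[k] x := by
    intro e
    apply h1
    have h9 : IsAncestor p (p^[k] x) y := hky
    rw [← e] at h9
    exact h9
  have hxr : x ≠ r := by
    intro e
    apply hxl
    rw [e, Function.iterate_fixed hr]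
  -- y side
  have hk' : p^[upSteps p (p^[k] x) y] y = p^[k] x := upSteps_spec hky
  set k' := upSteps p (p^[k] x) y with hk'def
  have hby : ∀ j, j < k' → p^[j] y ≠ r := by
    intro j hj hEq
    have hlr : p^[k] x = r := by
      have h9 : p^[k' - j] (p^[j] y) = p^[k'] y := by
        rw [← Function.iterate_add_apply]; congr 1; omega
      rw [hEq, Function.iterate_fixed hr] at h9
      rw [← hk', ← h9]
    have : p^[j] y = p^[k] x := by rw [hEq, hlr]
    have := upSteps_min this
    omega
  -- the two arms
  let A : G.Walk x (p^[k] x) := walkUp hspan k x hbx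
  let B : G.Walk y (p^[k] x) := (walkUp hspan k' y hby).copy rfl hk'
  let P : G.Walk x y := A.append B.reverse
  have hApath : A.IsPath := walkUp_isPath hstab hr hroot hspan k x hbx
  have hBpath : B.IsPath := by
    rw [show B = (walkUp hspan k' y hby).copy rfl hk' from rfl]
    rw [SimpleGraph.Walk.isPath_copy]
    exact walkUp_isPath hstab hr hroot hspan k' y hby
  have hAsup : A.support = (List.range (k+1)).map (fun j => p^[j] x) :=
    walkUp_support hspan k x hbx
  have hBsup : B.support = (List.range (k'+1)).map (fun j => p^[j] y) := by
    rw [show B = (walkUp hspan k' y hby).copy rfl hk' from rfl]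
    rw [SimpleGraph.Walk.support_copy]
    exact walkUp_support hspan k' y hby
  have hAedg : A.edges = (List.range k).map (fun j => s(p^[j] x, p^[j+1] x)) :=
    walkUp_edges hspan k x hbx
  have hBedg : B.edges = (List.range k').map (fun j => s(p^[j] y, p^[j+1] y)) := by
    rw [show B = (walkUp hspan k' y hby).copy rfl hk' from rfl]
    rw [SimpleGraph.Walk.edges_copy]
    exact walkUp_edges hspan k' y hby
  -- common vertices of the two arms must be the top
  have hdisj : ∀ z, z ∈ A.support → z ∈ B.support → z = p^[k] x := by
    intro z hzA hzB
    rw [hAsup, List.mem_map] at hzA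
    rw [hBsup, List.mem_map] at hzB
    obtain ⟨i, hi, hzi⟩ := hzA
    obtain ⟨j, hj, hzj⟩ := hzB
    rw [List.mem_range] at hi hj
    by_contra hne
    have hzy : IsAncestor p z y := ⟨j, hzj⟩
    have hzx : IsAncestor p z x := ⟨i, hzi⟩
    have h3 : IsAncestor p z (p^[k] x) := hmin z hzx hzy
    have hjk : j ≠ k' := by
      intro e
      apply hne
      rw [← hzj, e, hk']
    have h4 : IsAncestor p (p^[k] x) z := by
      refine ⟨k' - j, ?_⟩
      rw [← hzj, ← Function.iterate_add_apply, ← hk']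
      congr 1; omega
    exact hne (anc_antisymm hstab hr hroot h3 h4)
  have hPpath : P.IsPath := by
    rw [SimpleGraph.Walk.isPath_def, SimpleGraph.Walk.support_append, List.nodup_append]
    refine ⟨hApath.support_nodup, ?_, ?_⟩
    · exact (hBpath.reverse.support_nodup).tail
    · intro z hzA _ hzB rfl
      have hzB' : z ∈ B.reverse.support := List.mem_of_mem_tail hzB
      have hzBsup : z ∈ B.support := by
        rwa [SimpleGraph.Walk.support_reverse, List.mem_reverse] at hzB'
      have hzl : z = p^[k] x := hdisj z hzA hzBsup
      -- but the head of B.reverse is p^[k] x and it's not in the tail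
      have hhead : B.reverse.support = p^[k] x :: B.reverse.support.tail :=
        SimpleGraph.Walk.support_eq_cons _
      have : (p^[k] x) ∉ B.reverse.support.tail := by
        have hnd := hBpath.reverse.support_nodup
        rw [hhead] at hnd
        exact (List.nodup_cons.mp hnd).1
      rw [hzl] at hzB
      exact this hzB
  have hedgeP : s(y, x) ∉ P.edges := by
    rw [SimpleGraph.Walk.edges_append, List.mem_append]
    rintro (hA | hB)
    · rw [hAedg, List.mem_map] at hA
      obtain ⟨j, hj, hEq⟩ := hA
      rw [List.mem_range] at hj
      rcases Sym2.eq_iff.mp hEq.symm with ⟨hy', hx'⟩ | ⟨hy', hx'⟩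
      · -- p^[j] x = y, p^[j+1] x = x
        apply hxr
        exact eq_root_of_periodic hstab hr hroot (m := j+1) (by omega) hx'.symm
      · -- p^[j] x = x, p^[j+1] x = y
        cases j with
        | zero =>
          apply h2
          have h9 : y = p^[0+1] x := hy'
          rw [h9]
          simp
        | succ m =>
          apply hxr
          exact eq_root_of_periodic hstab hr hroot (m := m+1) (by omega) hx'.symm
    · rw [SimpleGraph.Walk.edges_reverse, List.mem_reverse, hBedg, List.mem_map] at hB
      obtain ⟨j, hj, hEq⟩ := hB
      rw [List.mem_range] at hj
      have hyr : y ≠ r := hby 0 (by omega)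
      rcases Sym2.eq_iff.mp hEq.symm with ⟨hy', hx'⟩ | ⟨hy', hx'⟩
      · -- p^[j] y = y, p^[j+1] y = x
        cases j with
        | zero =>
          apply h1
          refine ⟨1, ?_⟩
          simpa using hx'.symm
        | succ m =>
          apply hyr
          exact eq_root_of_periodic hstab hr hroot (m := m+1) (by omega) hy'.symm
      · -- p^[j+1] y = y
        apply hyr
        exact eq_root_of_periodic hstab hr hroot (m := j+1) (by omega) hy'.symm
  refine ⟨p^[k] x, k, k', rfl, hk', hmin, SimpleGraph.Walk.cons hxy.symm P, ?_, ?_, ?_⟩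
  · exact (SimpleGraph.Walk.cons_isCycle_iff P hxy.symm).mpr ⟨hPpath, hedgeP⟩
  · intro j hj
    rw [SimpleGraph.Walk.edges_cons, List.mem_cons]
    right
    rw [SimpleGraph.Walk.edges_append, List.mem_append]
    left
    rw [hAedg, List.mem_map]
    exact ⟨j, List.mem_range.mpr hj, rfl⟩
  · intro j hj
    rw [SimpleGraph.Walk.edges_cons, List.mem_cons]
    right
    rw [SimpleGraph.Walk.edges_append, List.mem_append]
    right
    rw [SimpleGraph.Walk.edges_reverse, List.mem_reverse, hBedg, List.mem_map]
    exact ⟨j, List.mem_range.mpr hj, rfl⟩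

end FundLib
section BaseLib

open Function SimpleGraph

variable {V : Type} [DecidableEq V] {G : SimpleGraph V} {p : V → V} {r : V}
variable (hstab : ∀ v : V, ∃ i : ℕ, p^[i + 1] v = p^[i] v)
variable (hr : p r = r) (hroot : ∀ v : V, p v = v → v = r)
variable (hspan : ∀ v : V, v ≠ r → G.Adj v (p v))

set_option linter.unusedSectionVars false
include hstab hr hroot hspan

lemma base_rel {a b : V}
    (h : (a ≠ r ∧ b = p a ∧ ∃ x y, G.Adj x y ∧ IsAncestor p a x ∧ ¬ IsAncestor p (p a) y)
      ∨ (G.Adj a b ∧ p a ≠ b ∧ p b ≠ a ∧ ¬ IsAncestor p a b ∧ ¬ IsAncestor p b a)) :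
    ∃ (s : V) (C : G.Walk s s), C.IsCycle ∧ s(a, p a) ∈ C.edges ∧ s(b, p b) ∈ C.edges := by
  rcases h with ⟨har, hb, x, y, hxy, hax, hpay⟩ | ⟨hab, hpab, hpba, hnab, hnba⟩
  · -- type (i) edge: b = p a
    have hpaa : IsAncestor p (p a) x := anc_trans (anc_parent a) hax
    have h1 : ¬ IsAncestor p x y := fun h' => hpay (anc_trans hpaa h')
    have h2 : p x ≠ y := by
      intro e
      by_cases hxa : x = a
      · apply hpay
        rw [← e, hxa]
        exact anc_refl (p a)
      · have h3 : IsAncestor p a (p x) := anc_of_anc_ne hax (fun e' => hxa e'.symm)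
        exact hpay (e ▸ anc_trans (anc_parent a) h3)
    obtain ⟨l, kx, ky, hkx, hky, hmin, C, hC, hmx, _⟩ :=
      fund hstab hr hroot hspan hxy h1 h2
    have hi : p^[upSteps p a x] x = a := upSteps_spec hax
    set i := upSteps p a x with hidef
    have hi1 : p^[i+1] x = p a := by rw [Function.iterate_succ_apply', hi]
    have hi2 : p^[i+1+1] x = p (p a) := by rw [Function.iterate_succ_apply', hi1]
    have hkxge : i + 2 ≤ kx := by
      by_contra hlt
      have hkx1 : kx ≤ i + 1 := by omega
      have hpal : IsAncestor p (p a) l := by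
        refine ⟨i + 1 - kx, ?_⟩
        rw [← hkx, ← Function.iterate_add_apply, ← hi1]
        congr 1; omega
      exact hpay (anc_trans hpal ⟨ky, hky⟩)
    refine ⟨y, C, hC, ?_, ?_⟩
    · have h9 := hmx i (by omega)
      rwa [hi, hi1] at h9
    · have h9 := hmx (i+1) (by omega)
      rw [hi1, hi2] at h9
      rw [hb]
      exact h9
  · -- type (ii) edge
    obtain ⟨l, kx, ky, hkx, hky, hmin, C, hC, hmx, hmy⟩ :=
      fund hstab hr hroot hspan hab hnab hpab
    have hkx1 : 1 ≤ kx := by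
      by_contra hlt
      have h0 : kx = 0 := by omega
      apply hnab
      have h9 : p^[kx] a = l := hkx
      rw [h0] at h9
      rw [show a = l from h9]
      exact ⟨ky, hky⟩
    have hky1 : 1 ≤ ky := by
      by_contra hlt
      have h0 : ky = 0 := by omega
      apply hnba
      have h9 : p^[ky] b = l := hky
      rw [h0] at h9
      rw [show b = l from h9]
      exact ⟨kx, hkx⟩
    refine ⟨b, C, hC, ?_, ?_⟩
    · have h9 := hmx 0 (by omega)
      simpa using h9
    · have h9 := hmy 0 (by omega)
      simpa using h9

lemma base {v v' : V} (hadj : (auxGraph G p r).Adj v v') :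
    ∃ (s : V) (C : G.Walk s s), C.IsCycle ∧ s(v, p v) ∈ C.edges ∧ s(v', p v') ∈ C.edges := by
  rw [auxGraph, SimpleGraph.fromRel_adj] at hadj
  obtain ⟨hne, h | h⟩ := hadj
  · exact base_rel hstab hr hroot hspan h
  · obtain ⟨s, C, hC, h1, h2⟩ := base_rel hstab hr hroot hspan h
    exact ⟨s, C, hC, h2, h1⟩

end BaseLib
section SplitLib

open Function SimpleGraph

variable {V : Type} [DecidableEq V] {G : SimpleGraph V}

lemma exists_firstHit {P : V → Prop} [DecidablePred P] {a b : V} (W : G.Walk a b)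
    (hex : ∃ z ∈ W.support, P z) :
    ∃ (y : V) (W₁ : G.Walk a y) (W₂ : G.Walk y b),
      W = W₁.append W₂ ∧ P y ∧ ∀ z ∈ W₁.support, P z → z = y := by
  induction W with
  | nil =>
    obtain ⟨z, hz, hPz⟩ := hex
    rw [SimpleGraph.Walk.support_nil, List.mem_singleton] at hz
    subst hz
    exact ⟨z, SimpleGraph.Walk.nil, SimpleGraph.Walk.nil, rfl, hPz, by simp⟩
  | @cons u v w h q ih =>
    by_cases hPa : P u
    · exact ⟨u, SimpleGraph.Walk.nil, SimpleGraph.Walk.cons h q, rfl, hPa, by simp⟩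
    · have hex' : ∃ z ∈ q.support, P z := by
        obtain ⟨z, hz, hPz⟩ := hex
        rw [SimpleGraph.Walk.support_cons, List.mem_cons] at hz
        rcases hz with rfl | hz
        · exact absurd hPz hPa
        · exact ⟨z, hz, hPz⟩
      obtain ⟨y, W₁, W₂, heq, hPy, hmin⟩ := ih hex'
      refine ⟨y, SimpleGraph.Walk.cons h W₁, W₂, by rw [SimpleGraph.Walk.cons_append, ← heq],
        hPy, ?_⟩
      intro z hz hPz
      rw [SimpleGraph.Walk.support_cons, List.mem_cons] at hz
      rcases hz with rfl | hz
      · exact absurd hPz hPa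
      · exact hmin z hz hPz

lemma path_first_edge {a b c : V} (R : G.Walk a c) (hR : R.IsPath) (he : s(a,b) ∈ R.edges) :
    ∃ (h' : G.Adj a b) (R' : G.Walk b c), R = SimpleGraph.Walk.cons h' R' := by
  cases R with
  | nil => simp at he
  | @cons _ d _ hadj R' =>
    rw [SimpleGraph.Walk.edges_cons, List.mem_cons] at he
    rcases he with h' | h'
    · rcases Sym2.eq_iff.mp h' with ⟨_, h2⟩ | ⟨h1, h2⟩
      · subst h2
        exact ⟨hadj, R', rfl⟩
      · exact absurd h1 hadj.ne
    · exfalso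
      have hmem : a ∈ R'.support := R'.fst_mem_support_of_mem_edges h'
      have hnd := hR.support_nodup
      rw [SimpleGraph.Walk.support_cons] at hnd
      exact (List.nodup_cons.mp hnd).1 hmem

lemma cycle_edge_split {s a b : V} (C : G.Walk s s) (hC : C.IsCycle) (he : s(a, b) ∈ C.edges) :
    ∃ Q : G.Walk b a, Q.IsPath ∧ s(a,b) ∉ Q.edges ∧
      (∀ z, z ∈ Q.support ↔ z ∈ C.support) ∧ (∀ e ∈ Q.edges, e ∈ C.edges) := by
  have ha : a ∈ C.support := C.fst_mem_support_of_mem_edges he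
  have key : ∀ (D : G.Walk a a), D.IsCycle → s(a,b) ∈ D.edges →
      (∀ z, z ∈ D.support ↔ z ∈ C.support) → (∀ e ∈ D.edges, e ∈ C.edges) →
      ∃ Q : G.Walk b a, Q.IsPath ∧ s(a,b) ∉ Q.edges ∧
        (∀ z, z ∈ Q.support ↔ z ∈ C.support) ∧ (∀ e ∈ Q.edges, e ∈ C.edges) := by
    intro D hD heD hsup hedg
    cases D with
    | nil => simp at heD
    | @cons _ c _ hadj T =>
      have hTpath : T.IsPath ∧ s(a, c) ∉ T.edges :=
        (SimpleGraph.Walk.cons_isCycle_iff T hadj).mp hD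
      by_cases hbc : b = c
      · subst hbc
        refine ⟨T, hTpath.1, hTpath.2, ?_, ?_⟩
        · intro z
          rw [← hsup z, SimpleGraph.Walk.support_cons, List.mem_cons]
          constructor
          · exact fun h' => Or.inr h'
          · rintro (rfl | h')
            · exact T.end_mem_support
            · exact h'
        · intro e heq
          exact hedg e (by rw [SimpleGraph.Walk.edges_cons]; exact List.mem_cons_of_mem _ heq)
      · have heT : s(a,b) ∈ T.edges := by
          rw [SimpleGraph.Walk.edges_cons, List.mem_cons] at heD
          rcases heD with h' | h'
          · exfalso
            rcases Sym2.eq_iff.mp h' with ⟨_, h2⟩ | ⟨h1, _⟩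
            · exact hbc h2
            · exact hadj.ne h1
          · exact h'
        have hRpath : T.reverse.IsPath := hTpath.1.reverse
        have heR : s(a,b) ∈ T.reverse.edges := by
          rw [SimpleGraph.Walk.edges_reverse, List.mem_reverse]; exact heT
        obtain ⟨h', R', hRE⟩ := path_first_edge T.reverse hRpath heR
        have hR'path : R'.IsPath := by
          have := hRpath
          rw [hRE] at this
          exact this.of_cons
        have haR' : a ∉ R'.support := by
          have hnd := hRpath.support_nodup
          rw [hRE, SimpleGraph.Walk.support_cons] at hnd
          exact (List.nodup_cons.mp hnd).1
        refine ⟨(SimpleGraph.Walk.cons hadj R'.reverse).reverse, ?_, ?_, ?_, ?_⟩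
        · refine SimpleGraph.Walk.IsPath.reverse ?_
          refine SimpleGraph.Walk.IsPath.cons hR'path.reverse ?_
          rw [SimpleGraph.Walk.support_reverse, List.mem_reverse]
          exact haR'
        · rw [SimpleGraph.Walk.edges_reverse, List.mem_reverse,
            SimpleGraph.Walk.edges_cons, List.mem_cons]
          rintro (h9 | h9)
          · rcases Sym2.eq_iff.mp h9 with ⟨_, h2⟩ | ⟨h1, _⟩
            · exact hbc h2
            · exact hadj.ne h1
          · rw [SimpleGraph.Walk.edges_reverse, List.mem_reverse] at h9
            exact haR' (R'.fst_mem_support_of_mem_edges h9)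
        · intro z
          rw [← hsup z]
          rw [SimpleGraph.Walk.support_reverse, List.mem_reverse,
            SimpleGraph.Walk.support_cons, List.mem_cons,
            SimpleGraph.Walk.support_reverse, List.mem_reverse]
          have hTsup : ∀ x, x ∈ T.support ↔ (x = a ∨ x ∈ R'.support) := by
            intro x
            rw [show T = (SimpleGraph.Walk.cons h' R').reverse by
                rw [← hRE, SimpleGraph.Walk.reverse_reverse]]
            rw [SimpleGraph.Walk.support_reverse, List.mem_reverse,
              SimpleGraph.Walk.support_cons, List.mem_cons]
          rw [SimpleGraph.Walk.support_cons, List.mem_cons, hTsup z]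
          tauto
        · intro e he'
          rw [SimpleGraph.Walk.edges_reverse, List.mem_reverse,
            SimpleGraph.Walk.edges_cons, List.mem_cons] at he'
          rcases he' with rfl | he'
          · exact hedg _ (by rw [SimpleGraph.Walk.edges_cons]; exact List.mem_cons_self)
          · rw [SimpleGraph.Walk.edges_reverse, List.mem_reverse] at he'
            refine hedg _ ?_
            rw [SimpleGraph.Walk.edges_cons]
            refine List.mem_cons_of_mem _ ?_
            have h9 : e ∈ T.reverse.edges := by
              rw [hRE, SimpleGraph.Walk.edges_cons]
              exact List.mem_cons_of_mem _ he'
            rw [SimpleGraph.Walk.edges_reverse, List.mem_reverse] at h9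
            exact h9
  refine key (C.rotate a ha) (hC.rotate ha) ?_ ?_ ?_
  · exact (C.rotate_edges a ha).mem_iff.mpr he
  · exact fun z => mem_support_rotate_s7 hC ha
  · exact fun e he' => (C.rotate_edges a ha).mem_iff.mp he'

end SplitLib
section MergeLib

open Function SimpleGraph

variable {V : Type} [DecidableEq V] {G : SimpleGraph V}

lemma merge {s₁ s₂ a b : V} {g : Sym2 V} (C₁ : G.Walk s₁ s₁) (C₂ : G.Walk s₂ s₂)
    (h₁ : C₁.IsCycle) (h₂ : C₂.IsCycle) (hf : s(a,b) ∈ C₁.edges) (hg : g ∈ C₂.edges)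
    {v v' : V} (hvv' : v ≠ v')
    (hv1 : v ∈ C₁.support) (hv2 : v ∈ C₂.support)
    (hv'1 : v' ∈ C₁.support) (hv'2 : v' ∈ C₂.support) :
    ∃ (t : V) (K : G.Walk t t), K.IsCycle ∧ s(a,b) ∈ K.edges ∧ g ∈ K.edges := by
  classical
  by_cases hfC₂ : s(a,b) ∈ C₂.edges
  · exact ⟨s₂, C₂, h₂, hfC₂, hg⟩
  obtain ⟨Q, hQpath, hQf, hQsup, hQedg⟩ := cycle_edge_split C₁ h₁ hf
  obtain ⟨y, Q₁, Qrest, hQeq, hPy, hmin₁⟩ :=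
    exists_firstHit (P := (· ∈ C₂.support)) Q ⟨v, (hQsup v).mpr hv1, hv2⟩
  have hyrev : y ∈ Qrest.reverse.support := by
    rw [SimpleGraph.Walk.support_reverse, List.mem_reverse]
    exact SimpleGraph.Walk.start_mem_support _
  obtain ⟨x, R₁, R₂, hReq, hPx, hmin₂⟩ :=
    exists_firstHit (P := (· ∈ C₂.support)) Qrest.reverse ⟨y, hyrev, hPy⟩
  -- basic path facts
  have hQ1path : Q₁.IsPath := by
    have h9 : (Q₁.append Qrest).IsPath := hQeq ▸ hQpath
    exact h9.of_append_left
  have hQrpath : Qrest.IsPath := by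
    have h9 : (Q₁.append Qrest).IsPath := hQeq ▸ hQpath
    exact h9.of_append_right
  have hR1path : R₁.IsPath := by
    have h9 : (R₁.append R₂).IsPath := hReq ▸ hQrpath.reverse
    exact h9.of_append_left
  have hR2path : R₂.IsPath := by
    have h9 : (R₁.append R₂).IsPath := hReq ▸ hQrpath.reverse
    exact h9.of_append_right
  have hQnodup : (Q₁.support ++ Qrest.support.tail).Nodup := by
    have h9 := hQpath.support_nodup
    rwa [hQeq, SimpleGraph.Walk.support_append] at h9
  have hQdisj := List.disjoint_of_nodup_append hQnodup
  -- membership transfers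
  have hmemQrest : ∀ z, z ∈ Qrest.support ↔ (z ∈ R₁.support ∨ z ∈ R₂.support) := by
    intro z
    rw [show Qrest.support = Qrest.reverse.support.reverse by
      rw [SimpleGraph.Walk.support_reverse, List.reverse_reverse]]
    rw [List.mem_reverse, hReq, SimpleGraph.Walk.mem_support_append_iff]
  -- x ≠ y
  have hxy : x ≠ y := by
    intro hEq
    subst hEq
    -- a hit different from x exists
    obtain ⟨z₀, hz₀Q, hz₀hit, hz₀ne⟩ : ∃ z₀, z₀ ∈ Q.support ∧ z₀ ∈ C₂.support ∧ z₀ ≠ x := by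
      by_cases hvy : v = x
      · exact ⟨v', (hQsup v').mpr hv'1, hv'2, fun e => hvv' (hvy.trans e.symm)⟩
      · exact ⟨v, (hQsup v).mpr hv1, hv2, hvy⟩
    rw [hQeq, SimpleGraph.Walk.mem_support_append_iff] at hz₀Q
    rcases hz₀Q with hz | hz
    · exact hz₀ne (hmin₁ z₀ hz hz₀hit)
    rcases (hmemQrest z₀).mp hz with hz' | hz'
    · exact hz₀ne (hmin₂ z₀ hz' hz₀hit)
    · -- z₀ in the middle part R₂ : Walk x x; so R₂ is nontrivial, so x repeats in Q
      have hz₀tail : z₀ ∈ R₂.reverse.support.tail := by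
        have h9 : z₀ ∈ R₂.reverse.support := by
          rw [SimpleGraph.Walk.support_reverse, List.mem_reverse]; exact hz'
        rw [SimpleGraph.Walk.support_eq_cons R₂.reverse] at h9
        rcases List.mem_cons.mp h9 with h9 | h9
        · exact absurd h9 hz₀ne
        · exact h9
      have hR2nn : R₂.reverse ≠ SimpleGraph.Walk.nil := by
        intro e
        rw [e] at hz₀tail
        simp at hz₀tail
      have hxtail : x ∈ R₂.reverse.support.tail := by
        rw [← mem_tail_closed hR2nn]
        exact SimpleGraph.Walk.start_mem_support _
      -- hence x ∈ Qrest.support.tail, but also x = y ∈ Q₁.support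
      have hxQrest : x ∈ Qrest.support.tail := by
        have h9 : Qrest = R₂.reverse.append R₁.reverse := by
          rw [← SimpleGraph.Walk.reverse_append, ← hReq, SimpleGraph.Walk.reverse_reverse]
        rw [h9, SimpleGraph.Walk.tail_support_append, List.mem_append]
        exact Or.inl hxtail
      exact hQdisj Q₁.end_mem_support hxQrest
  -- extract the arc of C₂ from x to y containing g
  have hx2 : x ∈ C₂.support := hPx
  have hyE : y ∈ (C₂.rotate x hx2).support := (mem_support_rotate_s7 h₂ hx2).mpr hPy
  have hEcyc : (C₂.rotate x hx2).IsCycle := h₂.rotate hx2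
  have hspec := (C₂.rotate x hx2).take_spec hyE
  have hEtail : (C₂.rotate x hx2).support.tail.Nodup := hEcyc.support_nodup
  have htail_eq : (C₂.rotate x hx2).support.tail =
      ((C₂.rotate x hx2).takeUntil y hyE).support.tail ++
      ((C₂.rotate x hx2).dropUntil y hyE).support.tail := by
    have h9 : (C₂.rotate x hx2).support =
        ((C₂.rotate x hx2).takeUntil y hyE).support ++
        ((C₂.rotate x hx2).dropUntil y hyE).support.tail := by
      have h8 := congrArg SimpleGraph.Walk.support hspec
      rw [SimpleGraph.Walk.support_append] at h8
      exact h8.symm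
    rw [SimpleGraph.Walk.support_eq_cons (C₂.rotate x hx2),
      SimpleGraph.Walk.support_eq_cons ((C₂.rotate x hx2).takeUntil y hyE)] at h9
    rw [List.cons_append] at h9
    exact (List.cons.injEq _ _ _ _).mp h9 |>.2
  rw [htail_eq] at hEtail
  have hdisjE := List.disjoint_of_nodup_append hEtail
  have hA1tail : ((C₂.rotate x hx2).takeUntil y hyE).support.tail.Nodup :=
    hEtail.of_append_left
  have hA2tail : ((C₂.rotate x hx2).dropUntil y hyE).support.tail.Nodup :=
    hEtail.of_append_right
  have hxA2 : x ∈ ((C₂.rotate x hx2).dropUntil y hyE).support.tail := by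
    have h9 : x ∈ ((C₂.rotate x hx2).dropUntil y hyE).support :=
      SimpleGraph.Walk.end_mem_support _
    rw [SimpleGraph.Walk.support_eq_cons] at h9
    rcases List.mem_cons.mp h9 with h9 | h9
    · exact absurd h9 hxy
    · exact h9
  have hyA1 : y ∈ ((C₂.rotate x hx2).takeUntil y hyE).support.tail := by
    have h9 : y ∈ ((C₂.rotate x hx2).takeUntil y hyE).support :=
      SimpleGraph.Walk.end_mem_support _
    rw [SimpleGraph.Walk.support_eq_cons] at h9
    rcases List.mem_cons.mp h9 with h9 | h9
    · exact absurd h9.symm hxy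
    · exact h9
  have hA1path : ((C₂.rotate x hx2).takeUntil y hyE).IsPath := by
    rw [SimpleGraph.Walk.isPath_def, SimpleGraph.Walk.support_eq_cons, List.nodup_cons]
    exact ⟨fun hc => hdisjE hc hxA2, hA1tail⟩
  have hA2path : ((C₂.rotate x hx2).dropUntil y hyE).IsPath := by
    rw [SimpleGraph.Walk.isPath_def, SimpleGraph.Walk.support_eq_cons, List.nodup_cons]
    exact ⟨fun hc => hdisjE hyA1 hc, hA2tail⟩
  have hgE : g ∈ (C₂.rotate x hx2).edges := (C₂.rotate_edges x hx2).mem_iff.mpr hg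
  have hgsplit : g ∈ ((C₂.rotate x hx2).takeUntil y hyE).edges ∨
      g ∈ ((C₂.rotate x hx2).dropUntil y hyE).edges := by
    rw [← List.mem_append, ← SimpleGraph.Walk.edges_append, hspec]
    exact hgE
  obtain ⟨A, hApath, hgA, hAedg, hAsup⟩ :
      ∃ A : G.Walk y x, A.IsPath ∧ g ∈ A.edges ∧ (∀ e ∈ A.edges, e ∈ C₂.edges) ∧
        (∀ z ∈ A.support, z ∈ C₂.support) := by
    rcases hgsplit with hgA | hgA
    · refine ⟨((C₂.rotate x hx2).takeUntil y hyE).reverse, hA1path.reverse, ?_, ?_, ?_⟩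
      · rw [SimpleGraph.Walk.edges_reverse, List.mem_reverse]; exact hgA
      · intro e he
        rw [SimpleGraph.Walk.edges_reverse, List.mem_reverse] at he
        exact (C₂.rotate_edges x hx2).mem_iff.mp
          (SimpleGraph.Walk.edges_takeUntil_subset _ _ he)
      · intro z hz
        rw [SimpleGraph.Walk.support_reverse, List.mem_reverse] at hz
        exact (mem_support_rotate_s7 h₂ hx2).mp
          (SimpleGraph.Walk.support_takeUntil_subset _ _ hz)
    · refine ⟨(C₂.rotate x hx2).dropUntil y hyE, hA2path, hgA, ?_, ?_⟩
      · intro e he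
        exact (C₂.rotate_edges x hx2).mem_iff.mp
          (SimpleGraph.Walk.edges_dropUntil_subset _ _ he)
      · intro z hz
        exact (mem_support_rotate_s7 h₂ hx2).mp
          (SimpleGraph.Walk.support_dropUntil_subset _ _ hz)
  -- assemble the new cycle
  have hadjab : G.Adj a b := C₁.adj_of_mem_edges hf
  have hP1edg : ∀ e ∈ R₁.reverse.edges, e ∈ Q.edges := by
    intro e he
    rw [SimpleGraph.Walk.edges_reverse, List.mem_reverse] at he
    have h9 : e ∈ Qrest.reverse.edges := by
      rw [hReq, SimpleGraph.Walk.edges_append, List.mem_append]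
      exact Or.inl he
    rw [SimpleGraph.Walk.edges_reverse, List.mem_reverse] at h9
    rw [hQeq, SimpleGraph.Walk.edges_append, List.mem_append]
    exact Or.inr h9
  have hQ1edg : ∀ e ∈ Q₁.edges, e ∈ Q.edges := by
    intro e he
    rw [hQeq, SimpleGraph.Walk.edges_append, List.mem_append]
    exact Or.inl he
  -- support facts for nodup
  have hP1sup : ∀ z ∈ R₁.reverse.support, z ∈ R₁.support := by
    intro z hz
    rwa [SimpleGraph.Walk.support_reverse, List.mem_reverse] at hz
  have hP1tail_sub : ∀ z ∈ R₁.reverse.support.tail, z ∈ Qrest.support.tail := by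
    intro z hz
    have hz' : z ∈ R₁.support := hP1sup z (List.mem_of_mem_tail hz)
    have hzx : z ≠ x := by
      intro e
      subst e
      have h9 := hR1path.reverse.support_nodup
      rw [SimpleGraph.Walk.support_eq_cons R₁.reverse] at h9
      exact (List.nodup_cons.mp h9).1 hz
    have hzy : z ≠ y := by
      intro e
      subst e
      exact hxy (hmin₂ z hz' hPy).symm
    have hzQrest : z ∈ Qrest.support := (hmemQrest z).mpr (Or.inl hz')
    rw [SimpleGraph.Walk.support_eq_cons Qrest] at hzQrest
    rcases List.mem_cons.mp hzQrest with h9 | h9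
    · exact absurd h9 hzy
    · exact h9
  have hWpath : (Q₁.append (A.append R₁.reverse)).IsPath := by
    rw [SimpleGraph.Walk.isPath_def, SimpleGraph.Walk.support_append,
      SimpleGraph.Walk.tail_support_append, List.nodup_append]
    refine ⟨hQ1path.support_nodup, List.nodup_append.mpr ⟨hApath.support_nodup.tail,
      hR1path.reverse.support_nodup.tail, ?_⟩, ?_⟩
    · -- A.tail vs P₁.tail
      intro z hzA _ hzP rfl
      have hz' : z ∈ R₁.support := hP1sup z (List.mem_of_mem_tail hzP)
      have hzhit : z ∈ C₂.support := hAsup z (List.mem_of_mem_tail hzA)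
      have hzx : z = x := hmin₂ z hz' hzhit
      subst hzx
      have h9 := hR1path.reverse.support_nodup
      rw [SimpleGraph.Walk.support_eq_cons R₁.reverse] at h9
      exact (List.nodup_cons.mp h9).1 hzP
    · -- Q₁ vs (A.tail ++ P₁.tail)
      intro z hzQ _ hz2 rfl
      rw [List.mem_append] at hz2
      rcases hz2 with hz2 | hz2
      · have hzhit : z ∈ C₂.support := hAsup z (List.mem_of_mem_tail hz2)
        have hzy : z = y := hmin₁ z hzQ hzhit
        subst hzy
        have h9 := hApath.support_nodup
        rw [SimpleGraph.Walk.support_eq_cons A] at h9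
        exact (List.nodup_cons.mp h9).1 hz2
      · exact hQdisj hzQ (hP1tail_sub z hz2)
  have hWedge : s(a,b) ∉ (Q₁.append (A.append R₁.reverse)).edges := by
    rw [SimpleGraph.Walk.edges_append, SimpleGraph.Walk.edges_append, List.mem_append,
      List.mem_append]
    rintro (h9 | h9 | h9)
    · exact hQf (hQ1edg _ h9)
    · exact hfC₂ (hAedg _ h9)
    · exact hQf (hP1edg _ h9)
  refine ⟨a, SimpleGraph.Walk.cons hadjab (Q₁.append (A.append R₁.reverse)), ?_, ?_, ?_⟩
  · exact (SimpleGraph.Walk.cons_isCycle_iff _ hadjab).mpr ⟨hWpath, hWedge⟩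
  · rw [SimpleGraph.Walk.edges_cons]
    exact List.mem_cons_self
  · rw [SimpleGraph.Walk.edges_cons]
    refine List.mem_cons_of_mem _ ?_
    rw [SimpleGraph.Walk.edges_append, List.mem_append, SimpleGraph.Walk.edges_append,
      List.mem_append]
    exact Or.inr (Or.inl hgA)

end MergeLib
section MainLib

open Function SimpleGraph

variable {V : Type} [DecidableEq V] {G : SimpleGraph V} {p : V → V} {r : V}
variable (hstab : ∀ v : V, ∃ i : ℕ, p^[i + 1] v = p^[i] v)
variable (hr : p r = r) (hroot : ∀ v : V, p v = v → v = r)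
variable (hspan : ∀ v : V, v ≠ r → G.Adj v (p v))

set_option linter.unusedSectionVars false
include hstab hr hroot hspan

lemma mp_fwd {u w : V} (hreach : (auxGraph G p r).Reachable u w) :
    u = w ∨ ∃ (x : V) (c : G.Walk x x), c.IsCycle ∧
      s(u, p u) ∈ c.edges ∧ s(w, p w) ∈ c.edges := by
  obtain ⟨W⟩ := hreach
  induction W with
  | nil => exact Or.inl rfl
  | @cons u x w hadj W ih =>
    obtain ⟨s, D, hD, heu, hex⟩ := base hstab hr hroot hspan hadj
    rcases ih with rfl | ⟨t, C, hC, hex', hew⟩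
    · exact Or.inr ⟨s, D, hD, heu, hex⟩
    · right
      have hxr : x ≠ r := by
        intro e
        exact not_adj_root hstab hr hroot u (e ▸ hadj)
      have hxp : x ≠ p x := fun e => hxr (hroot x e.symm)
      obtain ⟨t', K, hK, h1, h2⟩ := merge D C hD hC heu hew hxp
        (D.fst_mem_support_of_mem_edges hex) (C.fst_mem_support_of_mem_edges hex')
        (D.snd_mem_support_of_mem_edges hex) (C.snd_mem_support_of_mem_edges hex')
      exact ⟨t', K, hK, h1, h2⟩

end MainLib

theorem stmt7 {V : Type} [Fintype V] [DecidableEq V]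
    (G : SimpleGraph V) (p : V → V) (r : V)
    (hG : G.Connected) (hcard : 2 ≤ Fintype.card V)
    (hstab : ∀ v : V, ∃ i : ℕ, p^[i + 1] v = p^[i] v)
    (hr : p r = r) (hroot : ∀ v : V, p v = v → v = r)
    (hspan : ∀ v : V, v ≠ r → G.Adj v (p v))
    (u w : V) (hu : u ≠ r) (hw : w ≠ r) :
    (auxGraph G p r).Reachable u w ↔
      (u = w ∨ ∃ (x : V) (c : G.Walk x x), c.IsCycle ∧
        s(u, p u) ∈ c.edges ∧ s(w, p w) ∈ c.edges) := by
  constructor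
  · intro h
    exact mp_fwd hstab hr hroot hspan h
  · rintro (rfl | ⟨x, c, hC, h1, h2⟩)
    · rfl
    · exact mp_rev hstab hr hroot c hC h1 h2 hu hw
end

section
/- Let {u, v} be a non-tree edge of G with dep(u) ≥ dep(v), let w be the LCA of (u, v), and let C_e be the fundamental cycle of {u, v}, i.e., the simple cycle consisting of the edge {u, v} together with the tree path from u up to w and the tree path from v up to w. Then there is a path in the auxiliary graph G' of length at most 2·dep(p) whose vertex set contains every vertex of C_e other than w. -/
open Function

/-- `w` is the lowest common ancestor of `(u, v)`: a common ancestor of maximal depth. -/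
def IsLCA {V : Type} (p : V → V) (u v w : V) : Prop :=
  IsAncestor p w u ∧ IsAncestor p w v ∧
    ∀ x, IsAncestor p x u → IsAncestor p x v → dep p x ≤ dep p w

namespace Stmt8Aux

variable {V : Type} {p : V → V}

lemma dep_mem (hstab : ∀ v : V, ∃ i : ℕ, p^[i + 1] v = p^[i] v) (v : V) :
    p^[dep p v + 1] v = p^[dep p v] v := Nat.sInf_mem (hstab v)

lemma lt_dep_ne {v : V} {i : ℕ} (h : i < dep p v) : p^[i + 1] v ≠ p^[i] v :=
  fun he => absurd (Nat.sInf_le he) (not_le.2 h)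

lemma fixed_dep (hstab : ∀ v : V, ∃ i : ℕ, p^[i + 1] v = p^[i] v) (v : V) :
    p (p^[dep p v] v) = p^[dep p v] v := by
  have h := dep_mem hstab v
  rwa [Function.iterate_succ_apply'] at h

lemma iterate_stable (hstab : ∀ v : V, ∃ i : ℕ, p^[i + 1] v = p^[i] v) {v : V} {i : ℕ}
    (h : dep p v ≤ i) : p^[i] v = p^[dep p v] v := by
  have h1 : p^[i] v = p^[i - dep p v] (p^[dep p v] v) := by
    rw [← Function.iterate_add_apply]; congr 1; omega
  rw [h1, Function.iterate_fixed (fixed_dep hstab v)]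

lemma dep_eq_zero_of_fixed {v : V} (h : p v = v) : dep p v = 0 :=
  Nat.sInf_eq_zero.mpr (Or.inl (by simp [h]))

lemma dep_iterate (hstab : ∀ v : V, ∃ i : ℕ, p^[i + 1] v = p^[i] v) (v : V) (i : ℕ) :
    dep p (p^[i] v) = dep p v - i := by
  rcases le_or_gt (dep p v) i with h | h
  · rw [iterate_stable hstab h, dep_eq_zero_of_fixed (fixed_dep hstab v)]
    omega
  · apply le_antisymm
    · apply Nat.sInf_le
      show p^[dep p v - i + 1] (p^[i] v) = p^[dep p v - i] (p^[i] v)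
      rw [← Function.iterate_add_apply, ← Function.iterate_add_apply]
      have e1 : dep p v - i + 1 + i = dep p v + 1 := by omega
      have e2 : dep p v - i + i = dep p v := by omega
      rw [e1, e2]; exact dep_mem hstab v
    · have hj := dep_mem hstab (p^[i] v)
      rw [← Function.iterate_add_apply, ← Function.iterate_add_apply] at hj
      have e1 : dep p (p^[i] v) + 1 + i = (dep p (p^[i] v) + i) + 1 := by omega
      rw [e1] at hj
      have h2 : dep p v ≤ dep p (p^[i] v) + i :=
        Nat.sInf_le (show _ ∈ {j : ℕ | p^[j + 1] v = p^[j] v} from hj)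
      omega

lemma ancestor_dep_le (hstab : ∀ v : V, ∃ i : ℕ, p^[i + 1] v = p^[i] v) {x y : V}
    (h : IsAncestor p x y) : dep p x ≤ dep p y := by
  obtain ⟨i, hi⟩ := h
  rw [← hi, dep_iterate hstab]; omega

lemma ancestor_iterate (hstab : ∀ v : V, ∃ i : ℕ, p^[i + 1] v = p^[i] v) {x y : V}
    (h : IsAncestor p x y) : p^[dep p y - dep p x] y = x := by
  obtain ⟨i, hi⟩ := h
  have hd : dep p x = dep p y - i := by rw [← hi, dep_iterate hstab]
  rcases le_or_gt i (dep p y) with h' | h'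
  · have e : dep p y - dep p x = i := by omega
    rw [e, hi]
  · have h1 : p^[i] y = p^[dep p y] y := iterate_stable hstab (le_of_lt h')
    have e : dep p y - dep p x = dep p y := by omega
    rw [e, ← h1, hi]

/-- Adjacency along the tree chain in the auxiliary graph. -/
lemma chain_adj {G : SimpleGraph V} {r : V}
    (hstab : ∀ v : V, ∃ i : ℕ, p^[i + 1] v = p^[i] v) (hr : p r = r)
    {x y w : V} (hxy : G.Adj x y) {m : ℕ} (hwlt : m + dep p w < dep p x)
    (Hnoanc : ∀ z, IsAncestor p z x → dep p w < dep p z → ¬ IsAncestor p z y) :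
    ∀ i, i < m → (auxGraph G p r).Adj (p^[i] x) (p^[i + 1] x) := by
  intro i hi
  have hdi : dep p (p^[i] x) = dep p x - i := dep_iterate hstab x i
  have hdi1 : dep p (p^[i + 1] x) = dep p x - (i + 1) := dep_iterate hstab x (i + 1)
  rw [auxGraph, SimpleGraph.fromRel_adj]
  refine ⟨(lt_dep_ne (by omega)).symm, Or.inl (Or.inl ?_)⟩
  refine ⟨?_, Function.iterate_succ_apply' p i x, x, y, hxy, ⟨i, rfl⟩, ?_⟩
  · intro hR
    have h0 : dep p (p^[i] x) = 0 := by rw [hR]; exact dep_eq_zero_of_fixed hr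
    omega
  · rw [Function.iterate_succ_apply' p i x] at hdi1
    exact Hnoanc _ ⟨i + 1, Function.iterate_succ_apply' p i x⟩ (by omega)

/-- A walk down a chain of iterates. -/
def chainWalk (H : SimpleGraph V) (p : V → V) (x : V) :
    (m : ℕ) → (∀ i, i < m → H.Adj (p^[i] x) (p^[i + 1] x)) → H.Walk x (p^[m] x)
  | 0, _ => SimpleGraph.Walk.nil
  | m + 1, h =>
    (chainWalk H p x m fun i hi => h i (hi.trans (Nat.lt_succ_self m))).concat
      (h m (Nat.lt_succ_self m))

lemma chainWalk_length {H : SimpleGraph V} {x : V} :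
    ∀ (m : ℕ) (h : ∀ i, i < m → H.Adj (p^[i] x) (p^[i + 1] x)),
      (chainWalk H p x m h).length = m
  | 0, _ => rfl
  | m + 1, h => by
    rw [chainWalk, SimpleGraph.Walk.length_concat, chainWalk_length m]

lemma chainWalk_support {H : SimpleGraph V} {x : V} :
    ∀ (m : ℕ) (h : ∀ i, i < m → H.Adj (p^[i] x) (p^[i + 1] x)),
      (chainWalk H p x m h).support = (List.range (m + 1)).map (fun i => p^[i] x)
  | 0, _ => by simp [chainWalk]
  | m + 1, h => by
    rw [chainWalk, SimpleGraph.Walk.support_concat, chainWalk_support m,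
      @List.range_succ (m + 1)]
    simp

end Stmt8Aux

open Stmt8Aux in
theorem stmt8 {V : Type} [Fintype V] [DecidableEq V]
    (G : SimpleGraph V) (p : V → V) (r : V)
    (hG : G.Connected) (hcard : 2 ≤ Fintype.card V)
    (hstab : ∀ v : V, ∃ i : ℕ, p^[i + 1] v = p^[i] v)
    (hr : p r = r) (hroot : ∀ v : V, p v = v → v = r)
    (hspan : ∀ v : V, v ≠ r → G.Adj v (p v))
    (u v w : V) (huv : G.Adj u v) (hnt1 : p u ≠ v) (hnt2 : p v ≠ u)
    (hdep : dep p v ≤ dep p u) (hlca : IsLCA p u v w) :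
    ∃ (a b : V) (q : (auxGraph G p r).Walk a b), q.IsPath ∧
      q.length ≤ 2 * treeDep p ∧
      (∀ i : ℕ, i < dep p u - dep p w → p^[i] u ∈ q.support) ∧
      (∀ j : ℕ, j < dep p v - dep p w → p^[j] v ∈ q.support) := by
  obtain ⟨hwu, hwv, hmax⟩ := hlca
  have hdwv : dep p w ≤ dep p v := ancestor_dep_le hstab hwv
  have hdwu : dep p w ≤ dep p u := ancestor_dep_le hstab hwu
  set k := dep p u - dep p w with hk
  set l := dep p v - dep p w with hl
  have hku : p^[k] u = w := ancestor_iterate hstab hwu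
  have hlv : p^[l] v = w := ancestor_iterate hstab hwv
  have hdu_le : dep p u ≤ treeDep p := Finset.le_sup (Finset.mem_univ u)
  have hdv_le : dep p v ≤ treeDep p := Finset.le_sup (Finset.mem_univ v)
  have Hnu : ∀ z, IsAncestor p z u → dep p w < dep p z → ¬ IsAncestor p z v :=
    fun z hzu hzw hzv => absurd (hmax z hzu hzv) (by omega)
  have Hnv : ∀ z, IsAncestor p z v → dep p w < dep p z → ¬ IsAncestor p z u :=
    fun z hzv hzw hzu => absurd (hmax z hzu hzv) (by omega)
  rcases Nat.eq_zero_or_pos l with hl0 | hlpos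
  · -- Case A: w = v
    have hwv' : w = v := by
      have h0 : p^[0] v = w := by rw [← hl0]; exact hlv
      simpa using h0.symm
    have hk2 : 2 ≤ k := by
      by_contra h2
      have : k = 0 ∨ k = 1 := by omega
      rcases this with h0 | h1
      · rw [h0] at hku; simp at hku
        exact huv.ne (hku.trans hwv')
      · rw [h1] at hku; simp at hku
        exact hnt1 (hku.trans hwv')
    have hadjU := chain_adj hstab hr huv (w := w) (m := k - 1) (by omega) Hnu
    refine ⟨u, p^[k - 1] u, chainWalk _ p u (k - 1) hadjU, ?_, ?_, ?_, ?_⟩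
    · rw [SimpleGraph.Walk.isPath_def, chainWalk_support]
      refine List.Nodup.map_on ?_ List.nodup_range
      intro i hi j hj hij
      have d1 := dep_iterate hstab u i
      have d2 := dep_iterate hstab u j
      rw [hij] at d1
      rw [List.mem_range] at hi hj
      omega
    · rw [chainWalk_length]; omega
    · intro i hi
      rw [chainWalk_support]
      exact List.mem_map.mpr ⟨i, List.mem_range.mpr (by omega), rfl⟩
    · intro j hj
      exact absurd hj (by omega)
  · -- Case B: neither is an ancestor of the other
    have hnav : ¬ IsAncestor p v u := fun h => by
      have := hmax v h ⟨0, rfl⟩; omega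
    have hnau : ¬ IsAncestor p u v := fun h => by
      have := hmax u ⟨0, rfl⟩ h; omega
    have hkpos : 0 < k := by
      by_contra h0
      push_neg at h0
      have h0' : k = 0 := by omega
      rw [h0'] at hku; simp at hku
      rw [← hku] at hwv
      exact hnau hwv
    have hadjUV : (auxGraph G p r).Adj u v := by
      rw [auxGraph, SimpleGraph.fromRel_adj]
      exact ⟨huv.ne, Or.inl (Or.inr ⟨huv, hnt1, hnt2, hnau, hnav⟩)⟩
    have hadjU := chain_adj hstab hr huv (w := w) (m := k - 1) (by omega) Hnu
    have hadjV := chain_adj hstab hr huv.symm (w := w) (m := l - 1) (by omega) Hnv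
    set q : (auxGraph G p r).Walk (p^[k - 1] u) (p^[l - 1] v) :=
      (chainWalk _ p u (k - 1) hadjU).reverse.append
        (SimpleGraph.Walk.cons hadjUV (chainWalk _ p v (l - 1) hadjV)) with hq
    have ek : k - 1 + 1 = k := by omega
    have el : l - 1 + 1 = l := by omega
    have hsupp : q.support =
        ((List.range k).map (fun i => p^[i] u)).reverse ++
          (List.range l).map (fun j => p^[j] v) := by
      rw [hq, SimpleGraph.Walk.support_append, SimpleGraph.Walk.support_reverse,
        chainWalk_support, SimpleGraph.Walk.support_cons, chainWalk_support,
        List.tail_cons, ek, el]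
    have hlen : q.length = (k - 1) + ((l - 1) + 1) := by
      rw [hq, SimpleGraph.Walk.length_append, SimpleGraph.Walk.length_reverse,
        chainWalk_length, SimpleGraph.Walk.length_cons, chainWalk_length]
    refine ⟨p^[k - 1] u, p^[l - 1] v, q, ?_, ?_, ?_, ?_⟩
    · rw [SimpleGraph.Walk.isPath_def, hsupp, List.nodup_append]
      refine ⟨List.nodup_reverse.mpr (List.Nodup.map_on ?_ List.nodup_range),
        List.Nodup.map_on ?_ List.nodup_range, ?_⟩
      · intro i hi j hj hij
        have d1 := dep_iterate hstab u i
        have d2 := dep_iterate hstab u j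
        rw [hij] at d1
        rw [List.mem_range] at hi hj
        omega
      · intro i hi j hj hij
        have d1 := dep_iterate hstab v i
        have d2 := dep_iterate hstab v j
        rw [hij] at d1
        rw [List.mem_range] at hi hj
        omega
      · intro a ha _ hb rfl
        rw [List.mem_reverse, List.mem_map] at ha
        rw [List.mem_map] at hb
        obtain ⟨i, hi, rfl⟩ := ha
        obtain ⟨j, hj, hje⟩ := hb
        rw [List.mem_range] at hi hj
        have hcom := hmax _ ⟨i, rfl⟩ ⟨j, hje⟩
        have hd := dep_iterate hstab u i
        omega
    · rw [hlen]; omega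
    · intro i hi
      rw [hsupp]
      exact List.mem_append_left _ (List.mem_reverse.mpr
        (List.mem_map.mpr ⟨i, List.mem_range.mpr (by omega), rfl⟩))
    · intro j hj
      rw [hsupp]
      exact List.mem_append_right _
        (List.mem_map.mpr ⟨j, List.mem_range.mpr (by omega), rfl⟩)
end

section
/- Let (a_1, ..., a_m) be the DFS sequence of p. If a_i = a_j = v for indices i ≤ j, then for every k with i ≤ k ≤ j, the vertex a_k lies in the subtree of v. -/
open Function

/-- The children of `v`, listed in increasing order. -/
def childList {V : Type} [Fintype V] [LinearOrder V] (p : V → V) (v : V) : List V :=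
  (Finset.univ.filter (fun u => p u = v ∧ u ≠ v)).sort (· ≤ ·)

/-- DFS sequence of the subtree of `v`, with recursion fuel. -/
def dfsAux {V : Type} [Fintype V] [LinearOrder V] (p : V → V) : ℕ → V → List V
  | 0, v => [v]
  | n + 1, v =>
      if childList p v = [] then [v]
      else v :: ((childList p v).map (fun c => dfsAux p n c ++ [v])).flatten

/-- The DFS sequence of the rooted tree `p` with root `r`. Fuel `Fintype.card V`
suffices since the depth of every vertex is less than `Fintype.card V`. -/
def dfsSeq {V : Type} [Fintype V] [LinearOrder V] (p : V → V) (r : V) : List V :=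
  dfsAux p (Fintype.card V) r

lemma getElem_idx_congr {α : Type*} (l : List α) {i j : ℕ} (h : i = j) (hj : j < l.length) :
    l[i]'(h ▸ hj) = l[j]'hj := by subst h; rfl

lemma isAncestor_trans {V : Type} (p : V → V) {u c x : V}
    (h1 : IsAncestor p u c) (h2 : IsAncestor p c x) : IsAncestor p u x := by
  obtain ⟨b, hb⟩ := h1; obtain ⟨a, ha⟩ := h2
  exact ⟨b + a, by rw [Function.iterate_add_apply, ha, hb]⟩

lemma mem_childList {V : Type} [Fintype V] [LinearOrder V] (p : V → V) {u c : V}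
    (h : c ∈ childList p u) : p c = u ∧ c ≠ u := by
  simpa [childList] using h

lemma childList_nodup {V : Type} [Fintype V] [LinearOrder V] (p : V → V) (u : V) :
    (childList p u).Nodup := Finset.sort_nodup _ _

lemma mem_dfsAux {V : Type} [Fintype V] [LinearOrder V] (p : V → V) (n : ℕ) :
    ∀ (u x : V), x ∈ dfsAux p n u → IsAncestor p u x := by
  induction n with
  | zero =>
    intro u x h
    simp [dfsAux] at h
    exact ⟨0, by simp [h]⟩
  | succ n ih =>
    intro u x h
    rw [dfsAux] at h
    split at h
    · simp at h; exact ⟨0, by simp [h]⟩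
    · simp only [List.mem_cons, List.mem_flatten, List.mem_map] at h
      rcases h with rfl | ⟨l, ⟨c, hc, rfl⟩, hx⟩
      · exact ⟨0, rfl⟩
      · rcases List.mem_append.mp hx with hx | hx
        · have hcu := (mem_childList p hc).1
          exact isAncestor_trans p ⟨1, by simpa using hcu⟩ (ih c x hx)
        · simp at hx; exact ⟨0, by simp [hx]⟩

lemma fixed_of_periodic {V : Type} (p : V → V)
    (hstab : ∀ v : V, ∃ i : ℕ, p^[i + 1] v = p^[i] v)
    {u : V} {m : ℕ} (hper : p^[m + 1] u = u) : p u = u := by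
  obtain ⟨i, hi⟩ := hstab u
  have hfix : p (p^[i] u) = p^[i] u := by
    have hsucc := Function.iterate_succ_apply' p i u
    rw [← hsucc]; exact hi
  have hmul : p^[(m + 1) * i] u = u := by
    rw [Function.iterate_mul]; exact Function.iterate_fixed hper i
  have hge : i ≤ (m + 1) * i := Nat.le_mul_of_pos_left i (Nat.succ_pos m)
  have h2 : p^[(m + 1) * i] u = p^[i] u := by
    have hsum : (m + 1) * i = ((m + 1) * i - i) + i := (Nat.sub_add_cancel hge).symm
    rw [hsum, Function.iterate_add_apply]
    exact Function.iterate_fixed hfix _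
  calc p u = p (p^[(m + 1) * i] u) := by rw [hmul]
  _ = p (p^[i] u) := by rw [h2]
  _ = p^[i] u := hfix
  _ = p^[(m + 1) * i] u := h2.symm
  _ = u := hmul

lemma child_disjoint_aux {V : Type} (p : V → V)
    (hstab : ∀ v : V, ∃ i : ℕ, p^[i + 1] v = p^[i] v)
    {u c1 c2 x : V} (h1 : p c1 = u) (h2 : p c2 = u) (hn2 : c2 ≠ u)
    {a b : ℕ} (hab : a ≤ b) (ha : p^[a] x = c1) (hb : p^[b] x = c2) : c1 = c2 := by
  have hkey : p^[b - a] c1 = c2 := by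
    rw [← ha, ← Function.iterate_add_apply, Nat.sub_add_cancel hab, hb]
  rcases Nat.eq_zero_or_pos (b - a) with h0 | hpos
  · rw [h0] at hkey; exact hkey
  · exfalso
    obtain ⟨m, hm⟩ := Nat.exists_eq_succ_of_ne_zero (Nat.pos_iff_ne_zero.mp hpos)
    rw [hm, Function.iterate_succ_apply, h1] at hkey
    -- hkey : p^[m] u = c2
    have hper : p^[m + 1] u = u := by
      rw [Function.iterate_succ_apply', hkey, h2]
    have hfix := fixed_of_periodic p hstab hper
    exact hn2 (by rw [← hkey, Function.iterate_fixed hfix])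

lemma child_disjoint {V : Type} (p : V → V)
    (hstab : ∀ v : V, ∃ i : ℕ, p^[i + 1] v = p^[i] v)
    {u c1 c2 x : V} (h1 : p c1 = u) (hn1 : c1 ≠ u) (h2 : p c2 = u) (hn2 : c2 ≠ u)
    (a1 : IsAncestor p c1 x) (a2 : IsAncestor p c2 x) : c1 = c2 := by
  obtain ⟨a, ha⟩ := a1; obtain ⟨b, hb⟩ := a2
  rcases le_total a b with hab | hab
  · exact child_disjoint_aux p hstab h1 h2 hn2 hab ha hb
  · exact (child_disjoint_aux p hstab h2 h1 hn1 hab hb ha).symm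

lemma flatten_two {V : Type} (v : V) : ∀ (B : List (List V)) (M1 M2 M3 : List V),
    B.flatten = M1 ++ (v :: (M2 ++ (v :: M3))) →
    (∃ b b1 b3, b ∈ B ∧ b = b1 ++ (v :: (M2 ++ (v :: b3)))) ∨
    (∃ q1 q2, ∃ h1 : q1 < B.length, ∃ h2 : q2 < B.length, q1 < q2 ∧
      v ∈ B[q1]'h1 ∧ v ∈ B[q2]'h2) := by
  intro B
  induction B with
  | nil =>
    intro M1 M2 M3 h
    exfalso
    have := congrArg List.length h
    simp at this
  | cons b B' ih =>
    intro M1 M2 M3 h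
    rw [List.flatten_cons] at h
    have lift : ∀ M1' : List V, B'.flatten = M1' ++ (v :: (M2 ++ (v :: M3))) →
        (∃ b0 b1 b3, b0 ∈ b :: B' ∧ b0 = b1 ++ (v :: (M2 ++ (v :: b3)))) ∨
        (∃ q1 q2, ∃ h1 : q1 < (b :: B').length, ∃ h2 : q2 < (b :: B').length, q1 < q2 ∧
          v ∈ (b :: B')[q1]'h1 ∧ v ∈ (b :: B')[q2]'h2) := by
      intro M1' hh
      rcases ih M1' M2 M3 hh with ⟨b0, b1, b3, hmem, heq⟩ | ⟨q1, q2, h1, h2, hlt, m1, m2⟩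
      · exact Or.inl ⟨b0, b1, b3, List.mem_cons_of_mem _ hmem, heq⟩
      · exact Or.inr ⟨q1 + 1, q2 + 1, Nat.succ_lt_succ h1, Nat.succ_lt_succ h2,
          Nat.succ_lt_succ hlt,
          by simp only [List.getElem_cons_succ]; exact m1,
          by simp only [List.getElem_cons_succ]; exact m2⟩
    have mixed : v ∈ b → v ∈ B'.flatten →
        (∃ b0 b1 b3, b0 ∈ b :: B' ∧ b0 = b1 ++ (v :: (M2 ++ (v :: b3)))) ∨
        (∃ q1 q2, ∃ h1 : q1 < (b :: B').length, ∃ h2 : q2 < (b :: B').length, q1 < q2 ∧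
          v ∈ (b :: B')[q1]'h1 ∧ v ∈ (b :: B')[q2]'h2) := by
      intro hvb hvf
      obtain ⟨l, hl, hvl⟩ := List.mem_flatten.mp hvf
      obtain ⟨n, hn, hnl⟩ := List.mem_iff_getElem.mp hl
      exact Or.inr ⟨0, n + 1, Nat.succ_pos _, Nat.succ_lt_succ hn, Nat.succ_pos n,
        by simpa using hvb,
        by simp only [List.getElem_cons_succ]; rw [hnl]; exact hvl⟩
    rcases List.append_eq_append_iff.mp h with ⟨a', hM1, hB'⟩ | ⟨c', hb, hd⟩
    · exact lift a' hB'
    · cases c' with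
      | nil =>
        rw [List.append_nil] at hb
        rw [List.nil_append] at hd
        exact lift [] hd.symm
      | cons y c'' =>
        rw [List.cons_append] at hd
        injection hd with hy hd2
        subst hy
        -- hd2 : M2 ++ v :: M3 = c'' ++ B'.flatten
        rcases List.append_eq_append_iff.mp hd2.symm with ⟨a', hM2a, hvM3⟩ | ⟨c3, hc'', hvM3⟩
        · exact mixed (by rw [hb]; simp) (by rw [hvM3]; simp)
        · cases c3 with
          | nil =>
            rw [List.nil_append] at hvM3
            exact mixed (by rw [hb]; simp) (by rw [← hvM3]; simp)
          | cons z c4 =>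
            rw [List.cons_append] at hvM3
            injection hvM3 with hz hM3
            subst hz
            subst hc''
            exact Or.inl ⟨b, M1, c4, List.mem_cons_self, by rw [hb]⟩

lemma dfsAux_split {V : Type} [Fintype V] [LinearOrder V] (p : V → V)
    (hstab : ∀ v : V, ∃ i : ℕ, p^[i + 1] v = p^[i] v) (n : ℕ) :
    ∀ (u v : V) (L1 L2 L3 : List V),
      dfsAux p n u = L1 ++ (v :: (L2 ++ (v :: L3))) → ∀ x ∈ L2, IsAncestor p v x := by
  induction n with
  | zero =>
    intro u v L1 L2 L3 h
    exfalso
    have := congrArg List.length h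
    simp [dfsAux] at this
    omega
  | succ n ih =>
    intro u v L1 L2 L3 h x hx
    have h0 := h
    rw [dfsAux] at h
    by_cases hcs : childList p u = []
    · rw [if_pos hcs] at h
      exfalso
      have := congrArg List.length h
      simp at this
      omega
    · rw [if_neg hcs] at h
      by_cases hvu : v = u
      · subst hvu
        apply mem_dfsAux p (n + 1) _ x
        rw [h0]
        exact List.mem_append_right _ (List.mem_cons_of_mem _ (List.mem_append_left _ hx))
      · cases L1 with
        | nil =>
          rw [List.nil_append] at h
          injection h with h1 _
          exact absurd h1.symm hvu
        | cons y L1' =>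
          rw [List.cons_append] at h
          injection h with h1 h2
          rcases flatten_two v _ L1' L2 L3 h2 with
            ⟨b, b1, b3, hbmem, hbeq⟩ | ⟨q1, q2, hq1, hq2, hlt, hv1, hv2⟩
          · obtain ⟨c, hc, rfl⟩ := List.mem_map.mp hbmem
            rcases List.eq_nil_or_concat b3 with rfl | ⟨b3', z, rfl⟩
            · exfalso
              have heq2 : dfsAux p n c ++ [u] = (b1 ++ v :: L2) ++ [v] := by
                rw [hbeq]; simp
              have := (List.append_inj' heq2 rfl).2
              simp at this
              exact hvu this.symm
            · have heq2 : dfsAux p n c ++ [u] = (b1 ++ (v :: (L2 ++ (v :: b3')))) ++ [z] := by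
                rw [hbeq]; simp
              have hdfs := (List.append_inj' heq2 rfl).1
              exact ih c v b1 L2 b3' hdfs x hx
          · exfalso
            rw [List.getElem_map] at hv1 hv2
            have hq1' : q1 < (childList p u).length := by simpa using hq1
            have hq2' : q2 < (childList p u).length := by simpa using hq2
            have hv1' : v ∈ dfsAux p n ((childList p u)[q1]'hq1') := by
              rcases List.mem_append.mp hv1 with hh | hh
              · exact hh
              · simp at hh; exact absurd hh hvu
            have hv2' : v ∈ dfsAux p n ((childList p u)[q2]'hq2') := by
              rcases List.mem_append.mp hv2 with hh | hh
              · exact hh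
              · simp at hh; exact absurd hh hvu
            have a1 := mem_dfsAux p n _ v hv1'
            have a2 := mem_dfsAux p n _ v hv2'
            have hc1 := mem_childList p (List.getElem_mem hq1')
            have hc2 := mem_childList p (List.getElem_mem hq2')
            have hEq := child_disjoint p hstab hc1.1 hc1.2 hc2.1 hc2.2 a1 a2
            have := ((childList_nodup p u).getElem_inj_iff).mp hEq
            omega

theorem stmt12 {V : Type} [Fintype V] [LinearOrder V]
    (p : V → V) (r : V)
    (hstab : ∀ v : V, ∃ i : ℕ, p^[i + 1] v = p^[i] v)
    (hr : p r = r) (hroot : ∀ v : V, p v = v → v = r)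
    (A : List V) (hA : A = dfsSeq p r)
    (v : V) (i j k : ℕ)
    (hi : i < A.length) (hj : j < A.length) (hk : k < A.length)
    (hvi : A[i]'hi = v) (hvj : A[j]'hj = v)
    (hik : i ≤ k) (hkj : k ≤ j) :
    IsAncestor p v (A[k]'hk) := by
  rcases eq_or_lt_of_le hik with rfl | hik'
  · exact ⟨0, by simpa using hvi⟩
  rcases eq_or_lt_of_le hkj with rfl | hkj'
  · exact ⟨0, by simpa using hvj⟩
  have hA' : dfsAux p (Fintype.card V) r = A := hA.symm
  have hjD : j - i - 1 < (A.drop (i + 1)).length := by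
    rw [List.length_drop]; omega
  have hgetj : (A.drop (i + 1))[j - i - 1]'hjD = v := by
    rw [List.getElem_drop]
    exact (getElem_idx_congr A (by omega) hj).trans hvj
  have e1 : A = A.take i ++ A[i]'hi :: A.drop (i + 1) := by
    rw [← List.drop_eq_getElem_cons hi, List.take_append_drop]
  have e2 : A.drop (i + 1) =
      (A.drop (i + 1)).take (j - i - 1) ++ v :: (A.drop (i + 1)).drop (j - i - 1 + 1) := by
    conv_lhs => rw [← List.take_append_drop (j - i - 1) (A.drop (i + 1)),
      List.drop_eq_getElem_cons hjD]
    rw [hgetj]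
  have hsplit : dfsAux p (Fintype.card V) r = A.take i ++ v ::
      ((A.drop (i + 1)).take (j - i - 1) ++ v :: (A.drop (i + 1)).drop (j - i - 1 + 1)) := by
    rw [hA']
    conv_lhs => rw [e1, hvi, e2]
  have key := dfsAux_split p hstab (Fintype.card V) r v _ _ _ hsplit
  apply key
  have hkD : k - i - 1 < ((A.drop (i + 1)).take (j - i - 1)).length := by
    rw [List.length_take, List.length_drop]; omega
  have hxeq : ((A.drop (i + 1)).take (j - i - 1))[k - i - 1]'hkD = A[k]'hk := by
    rw [List.getElem_take, List.getElem_drop]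
    exact getElem_idx_congr A (by omega) hk
  rw [← hxeq]
  exact List.getElem_mem _
end

section
/- Let w be the LCA of (u, v), and let û be an ancestor of u with dep(û) ≥ dep(v). Then the LCA of (û, v) is also w. -/
open Function

lemma dep_spec {V : Type} (p : V → V) (hstab : ∀ v : V, ∃ i : ℕ, p^[i + 1] v = p^[i] v)
    (x : V) : p^[dep p x + 1] x = p^[dep p x] x :=
  Nat.sInf_mem (hstab x)

lemma dep_zero {V : Type} (p : V → V) (hstab : ∀ v : V, ∃ i : ℕ, p^[i + 1] v = p^[i] v)
    (x : V) (h : dep p x = 0) : p x = x := by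
  have := dep_spec p hstab x
  rw [h] at this
  simpa using this

lemma dep_p {V : Type} (p : V → V) (hstab : ∀ v : V, ∃ i : ℕ, p^[i + 1] v = p^[i] v)
    (x : V) : dep p (p x) = dep p x - 1 := by
  rcases Nat.eq_zero_or_pos (dep p x) with h | h
  · rw [h]
    have hpx := dep_zero p hstab x h
    rw [hpx, h]
  · have h1 : dep p (p x) ≤ dep p x - 1 := by
      apply Nat.sInf_le
      show p^[dep p x - 1 + 1] (p x) = p^[dep p x - 1] (p x)
      rw [← Function.iterate_succ_apply, ← Function.iterate_succ_apply]
      simp only [Nat.succ_eq_add_one, Nat.sub_add_cancel h]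
      exact dep_spec p hstab x
    have h2 : dep p x ≤ dep p (p x) + 1 := by
      apply Nat.sInf_le
      have := dep_spec p (x := p x) hstab
      simp only [Set.mem_setOf_eq, Function.iterate_succ_apply]
      exact this
    omega

lemma dep_iter {V : Type} (p : V → V) (hstab : ∀ v : V, ∃ i : ℕ, p^[i + 1] v = p^[i] v)
    (k : ℕ) (x : V) : dep p (p^[k] x) = dep p x - k := by
  induction k with
  | zero => simp
  | succ n ih =>
    rw [Function.iterate_succ_apply', dep_p p hstab, ih]
    omega

lemma anc_dep_le {V : Type} (p : V → V) (hstab : ∀ v : V, ∃ i : ℕ, p^[i + 1] v = p^[i] v)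
    {a b : V} (h : IsAncestor p a b) : dep p a ≤ dep p b := by
  obtain ⟨i, hi⟩ := h
  rw [← hi, dep_iter p hstab]
  omega

lemma anc_of_anc {V : Type} (p : V → V) (hstab : ∀ v : V, ∃ i : ℕ, p^[i + 1] v = p^[i] v)
    {u w uhat : V} (hw : IsAncestor p w u) (hu : IsAncestor p uhat u)
    (hle : dep p w ≤ dep p uhat) : IsAncestor p w uhat := by
  obtain ⟨i, hi⟩ := hw
  obtain ⟨j, hj⟩ := hu
  rcases le_or_gt j i with h | h
  · exact ⟨i - j, by rw [← hj, ← Function.iterate_add_apply, Nat.sub_add_cancel h, hi]⟩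
  · have huw : uhat = p^[j - i] w := by
      rw [← hi, ← Function.iterate_add_apply, Nat.sub_add_cancel h.le, hj]
    have hd : dep p uhat = dep p w - (j - i) := by
      rw [huw, dep_iter p hstab]
    have hw0 : dep p w = 0 := by omega
    have : p w = w := dep_zero p hstab w hw0
    have : p^[j - i] w = w := Function.iterate_fixed this _
    exact ⟨0, by simp [huw, this]⟩

theorem stmt15 {V : Type} [Fintype V] [DecidableEq V]
    (p : V → V) (r : V)
    (hstab : ∀ v : V, ∃ i : ℕ, p^[i + 1] v = p^[i] v)
    (hr : p r = r) (hroot : ∀ v : V, p v = v → v = r)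
    (u v w uhat : V) (hlca : IsLCA p u v w)
    (hanc : IsAncestor p uhat u) (hdep : dep p v ≤ dep p uhat) :
    IsLCA p uhat v w := by
  obtain ⟨hwu, hwv, hmax⟩ := hlca
  refine ⟨?_, hwv, ?_⟩
  · exact anc_of_anc p hstab hwu hanc
      (le_trans (anc_dep_le p hstab hwv) hdep)
  · intro x hxu hxv
    apply hmax x _ hxv
    obtain ⟨i, hi⟩ := hxu
    obtain ⟨j, hj⟩ := hanc
    exact ⟨i + j, by rw [Function.iterate_add_apply, hj, hi]⟩
end

section
/- Let w be the LCA of (u, v), let u' be an ancestor of u and v' an ancestor of v, and suppose dep(w) < dep(u') and dep(w) < dep(v'). Then the LCA of (u', v') is also w. -/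
open Function

lemma dep_iterate_le {V : Type} (p : V → V)
    (hstab : ∀ v : V, ∃ i : ℕ, p^[i + 1] v = p^[i] v) (v : V) (k : ℕ) :
    dep p (p^[k] v) ≤ dep p v := by
  induction k with
  | zero => simp
  | succ k ih =>
    refine le_trans ?_ ih
    set x := p^[k] v
    have hx : p^[dep p x + 1] x = p^[dep p x] x := Nat.sInf_mem (hstab x)
    have : p^[dep p x + 1] (p x) = p^[dep p x] (p x) := by
      rw [← Function.iterate_succ_apply, ← Function.iterate_succ_apply,
        Function.iterate_succ_apply', Function.iterate_succ_apply']
      rw [Function.iterate_succ_apply'] at hx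
      rw [hx]; exact hx
    calc dep p (p^[k+1] v) = dep p (p x) := by
          simp [x, Function.iterate_succ_apply']
      _ ≤ dep p x := Nat.sInf_le this

lemma ancestor_trans {V : Type} (p : V → V) {x a b : V}
    (h1 : IsAncestor p x a) (h2 : IsAncestor p a b) : IsAncestor p x b := by
  obtain ⟨j, rfl⟩ := h1
  obtain ⟨i, rfl⟩ := h2
  exact ⟨j + i, (Function.iterate_add_apply p j i b)⟩

lemma ancestor_chain {V : Type} (p : V → V) {a b u : V}
    (ha : IsAncestor p a u) (hb : IsAncestor p b u) :
    IsAncestor p b a ∨ IsAncestor p a b := by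
  obtain ⟨i, rfl⟩ := ha
  obtain ⟨j, rfl⟩ := hb
  rcases le_total i j with h | h
  · exact Or.inl ⟨j - i, by rw [← Function.iterate_add_apply, Nat.sub_add_cancel h]⟩
  · exact Or.inr ⟨i - j, by rw [← Function.iterate_add_apply, Nat.sub_add_cancel h]⟩

theorem stmt16 {V : Type} [Fintype V] [DecidableEq V]
    (p : V → V) (r : V)
    (hstab : ∀ v : V, ∃ i : ℕ, p^[i + 1] v = p^[i] v)
    (hr : p r = r) (hroot : ∀ v : V, p v = v → v = r)
    (u v w u' v' : V) (hlca : IsLCA p u v w)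
    (hu' : IsAncestor p u' u) (hv' : IsAncestor p v' v)
    (hdu : dep p w < dep p u') (hdv : dep p w < dep p v') :
    IsLCA p u' v' w := by
  obtain ⟨hwu, hwv, hmax⟩ := hlca
  have hwu' : IsAncestor p w u' := by
    rcases ancestor_chain p hu' hwu with h | h
    · exact h
    · obtain ⟨k, rfl⟩ := h
      exact absurd (dep_iterate_le p hstab w k) (not_le.mpr hdu)
  have hwv' : IsAncestor p w v' := by
    rcases ancestor_chain p hv' hwv with h | h
    · exact h
    · obtain ⟨k, rfl⟩ := h
      exact absurd (dep_iterate_le p hstab w k) (not_le.mpr hdv)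
  exact ⟨hwu', hwv', fun x hxu' hxv' =>
    hmax x (ancestor_trans p hxu' hu') (ancestor_trans p hxv' hv')⟩
end

section
/- If u, w ∈ V lie in different connected components of G, then no simple cycle of the apex graph G* contains both u and w. -/
/-- The apex graph `G*` on `Option V` (`none` plays the role of the new vertex `v*`):
it has all edges of `G` together with an edge from every vertex of `V` to `v*`. -/
def apexGraph {V : Type} (G : SimpleGraph V) : SimpleGraph (Option V) :=
  SimpleGraph.fromRel (fun a b =>
    match a, b with
    | some x, some y => G.Adj x y
    | some _, none => True
    | none, _ => False)

lemma apexGraph_adj_some {V : Type} (G : SimpleGraph V) {a b : V} :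
    (apexGraph G).Adj (some a) (some b) → G.Adj a b := by
  rintro ⟨hne, h | h⟩
  · exact h
  · exact h.symm

/-- A walk in the apex graph avoiding `none` yields reachability in `G`. -/
lemma reachable_of_walk_avoiding {V : Type} (G : SimpleGraph V) :
    ∀ {x y : Option V} (p : (apexGraph G).Walk x y), none ∉ p.support →
    ∀ a b : V, x = some a → y = some b → G.Reachable a b := by
  intro x y p
  induction p with
  | nil =>
    rintro _ a b rfl h
    cases h
    exact SimpleGraph.Reachable.refl a
  | cons hadj q ih =>
    rename_i s t r
    intro hnone a b hs hr
    subst hs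
    have ht : t ∈ (SimpleGraph.Walk.cons hadj q).support := by
      simp [SimpleGraph.Walk.support_cons, SimpleGraph.Walk.start_mem_support]
    obtain ⟨c, rfl⟩ : ∃ c, t = some c := by
      cases t with
      | none => exact absurd ht hnone
      | some c => exact ⟨c, rfl⟩
    have hnone' : none ∉ q.support := fun hn => hnone (by simp [hn])
    exact (apexGraph_adj_some G hadj).reachable.trans (ih hnone' c b rfl hr)

theorem stmt18 {V : Type} [Fintype V] [DecidableEq V]
    (G : SimpleGraph V) (u w : V) (h : ¬ G.Reachable u w) :
    ¬ ∃ (x : Option V) (c : (apexGraph G).Walk x x), c.IsCycle ∧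
      (some u) ∈ c.support ∧ (some w) ∈ c.support := by
  rintro ⟨x, c, hc, hu, hw⟩
  classical
  -- some w appears in the tail of c's support
  have hwt : some w ∈ c.support.tail := by
    cases c with
    | nil => simp at hc
    | cons hadj q =>
      rcases SimpleGraph.Walk.mem_support_iff _ |>.mp hw with h1 | h2
      · subst h1
        simp [q.end_mem_support]
      · simpa using h2
  -- rotate c to start at some u
  set c' := c.rotate (some u) hu with hc'
  have hc'cyc : c'.IsCycle := hc.rotate hu
  have hw' : some w ∈ c'.support := by
    have := (SimpleGraph.Walk.support_rotate c (some u) hu).mem_iff.mpr hwt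
    exact List.mem_of_mem_tail this
  -- split into two arcs
  set p := c'.takeUntil (some w) hw' with hp
  set q := c'.dropUntil (some w) hw' with hq
  have hspec : p.append q = c' := c'.take_spec hw'
  -- `none` cannot be in both arcs
  have hnodup : c'.support.tail.Nodup := hc'cyc.2
  have key : none ∉ p.support ∨ none ∉ q.support := by
    by_contra hcon
    push_neg at hcon
    obtain ⟨hnp, hnq⟩ := hcon
    have hnp' : none ∈ p.support.tail := by
      rcases (SimpleGraph.Walk.mem_support_iff _).mp hnp with h1 | h2
      · exact absurd h1 (by simp)
      · exact h2
    have hnq' : none ∈ q.support.tail := by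
      rcases (SimpleGraph.Walk.mem_support_iff _).mp hnq with h1 | h2
      · exact absurd h1 (by simp)
      · exact h2
    have htail : c'.support.tail = p.support.tail ++ q.support.tail := by
      rw [← hspec, SimpleGraph.Walk.support_append,
        List.tail_append_of_ne_nil (SimpleGraph.Walk.support_ne_nil _)]
    rw [htail] at hnodup
    exact List.disjoint_of_nodup_append hnodup hnp' hnq'
  rcases key with hk | hk
  · exact h (reachable_of_walk_avoiding G p hk u w rfl rfl)
  · exact h ((reachable_of_walk_avoiding G q hk w u rfl rfl).symm)
end
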